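/- arXiv:2211.15431 — 2 statements merged into one kernel-verified Lean document; each statement's English description precedes it below -/
import Mathlib

section
/- For any fixed point (K*, P*, τ*) = Ψ^T(K*, P*, τ*) there exists a fixed point (K^H, P^H, τ^H) = Ψ^{H,T}(K^H, P^H, τ^H) with (K*, P*, τ*) ≤ (K^H, P^H, τ^H) componentwise. Conversely, for any fixed point (K^H, P^H, τ^H) = Ψ^{H,T}(K^H, P^H, τ^H) there exists a fixed point (K*, P*, τ*) = Ψ^T(K*, P*, τ*) with (K*, P*, τ*) ≤ (K^H, P^H, τ^H) componentwise. -/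
open MeasureTheory

namespace Paper

open Classical in
/-- real-valued indicator of a proposition -/
noncomputable def indR (p : Prop) : ℝ := if p then 1 else 0

open Classical in
/-- boolean indicator of a proposition -/
noncomputable def indB (p : Prop) : Bool := if p then true else false

/-- The atom of the σ-algebra `m` containing the point `ω`:
the intersection of all `m`-measurable sets containing `ω`. -/
def atomOf {Ω : Type*} (m : MeasurableSpace Ω) (ω : Ω) : Set Ω :=
  ⋂₀ {s : Set Ω | MeasurableSet[m] s ∧ ω ∈ s}

/-- The set `S`, with the order induced from the ambient preorder, is a nonempty complete
lattice: it has a greatest and a least element and every subset of `S` has a least upper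
bound and a greatest lower bound within `S`. -/
def LatticeStructure {X : Type*} [Preorder X] (S : Set X) : Prop :=
  S.Nonempty ∧
  (∃ top ∈ S, ∀ z ∈ S, z ≤ top) ∧
  (∃ bot ∈ S, ∀ z ∈ S, bot ≤ z) ∧
  (∀ A ⊆ S,
    (∃ u ∈ S, (∀ a ∈ A, a ≤ u) ∧ ∀ w ∈ S, (∀ a ∈ A, a ≤ w) → u ≤ w) ∧
    (∃ v ∈ S, (∀ a ∈ A, v ≤ a) ∧ ∀ w ∈ S, (∀ a ∈ A, w ≤ a) → w ≤ v))

/-- The space of triples `(K, P, τ)`: capital process, survival-probability process,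
default-time vector, with the componentwise (pointwise) order. -/
abbrev Tri (Ω : Type*) (n ℓ : ℕ) :=
  (Fin (ℓ+1) → Ω → Fin n → ℝ) × (Fin (ℓ+1) → Ω → Fin n → ℝ) × (Fin n → Ω → ℝ)

/-- Data of the single-maturity interbank model. -/
structure SM (Ω : Type*) (n ℓ : ℕ) where
  /-- maturity -/
  T : ℝ
  /-- times `0 = t 0 < t 1 < ... < t ℓ = T` -/
  t : Fin (ℓ+1) → ℝ
  /-- external asset process -/
  x : Fin (ℓ+1) → Ω → Fin n → ℝ
  /-- interbank liabilities -/
  L : Fin n → Fin n → ℝ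
  /-- external liabilities -/
  L0 : Fin n → ℝ
  /-- recovery rate -/
  β : ℝ
  /-- risk-free rate -/
  r : ℝ

namespace SM

variable {Ω : Type*} {n ℓ : ℕ}

/-- total liabilities `p̄_i` -/
noncomputable def pbar (M : SM Ω n ℓ) (i : Fin n) : ℝ := (∑ j, M.L i j) + M.L0 i

/-- discount factor `e^{-r (T - t l)}` -/
noncomputable def disc (M : SM Ω n ℓ) (l : Fin (ℓ+1)) : ℝ :=
  Real.exp (-(M.r * (M.T - M.t l)))

/-- the capital component `Ψ^T_K` of the clearing map -/
noncomputable def ΨK (M : SM Ω n ℓ) (l : Fin (ℓ+1)) (Pt : Ω → Fin n → ℝ)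
    (ω : Ω) (i : Fin n) : ℝ :=
  M.x l ω i + M.disc l * (∑ j, M.L j i * (M.β + (1 - M.β) * Pt ω j))
    - M.disc l * M.pbar i

/-- the default-time component `Ψ^T_τ` of the clearing map: the first time `t l` at which
the capital of bank `i` is negative, and `T + 1` if the capital stays nonnegative -/
noncomputable def Ψτ (M : SM Ω n ℓ) (K : Fin (ℓ+1) → Ω → Fin n → ℝ)
    (i : Fin n) (ω : Ω) : ℝ :=
  sInf (insert (M.T + 1) ((fun l => M.t l) '' {l : Fin (ℓ+1) | K l ω i < 0}))

/-- the survival-probability component `Ψ^T_P` of the clearing map: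
`ℙ(τ_i > T | 𝓕 l)` -/
noncomputable def ΨP [MeasurableSpace Ω] (M : SM Ω n ℓ)
    (𝓕 : Fin (ℓ+1) → MeasurableSpace Ω) (μ : Measure Ω)
    (τ : Fin n → Ω → ℝ) (l : Fin (ℓ+1)) (ω : Ω) (i : Fin n) : ℝ :=
  (μ[fun ω' => indR (M.T < τ i ω') | 𝓕 l]) ω

/-- membership in the domain `𝔻^T`: adaptedness, the balance-sheet bounds on `K`,
`P` valued in `[0,1]`, and `τ` valued in `{t_0, ..., t_ℓ, T+1}` -/
def memD [MeasurableSpace Ω] (M : SM Ω n ℓ) (𝓕 : Fin (ℓ+1) → MeasurableSpace Ω)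
    (K P : Fin (ℓ+1) → Ω → Fin n → ℝ) (τ : Fin n → Ω → ℝ) : Prop :=
  (∀ l i, Measurable[𝓕 l] fun ω => K l ω i) ∧
  (∀ l i, Measurable[𝓕 l] fun ω => P l ω i) ∧
  (∀ l ω i, M.x l ω i - M.disc l * M.pbar i ≤ K l ω i) ∧
  (∀ l ω i, K l ω i ≤ M.x l ω i + M.disc l * ((∑ j, M.L j i) - M.pbar i)) ∧
  (∀ l ω i, 0 ≤ P l ω i ∧ P l ω i ≤ 1) ∧
  (∀ i ω, (∃ l, τ i ω = M.t l) ∨ τ i ω = M.T + 1)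

/-- the clearing map `Ψ^T` -/
noncomputable def Ψmap [MeasurableSpace Ω] (M : SM Ω n ℓ)
    (𝓕 : Fin (ℓ+1) → MeasurableSpace Ω) (μ : Measure Ω) (z : Tri Ω n ℓ) : Tri Ω n ℓ :=
  (fun l ω i => M.ΨK l (z.2.1 l) ω i,
   fun l ω i => M.ΨP 𝓕 μ z.2.2 l ω i,
   fun i ω => M.Ψτ z.1 i ω)

/-- the set of clearing solutions: fixed points of `Ψ^T` in `𝔻^T` -/
def clearingSet [MeasurableSpace Ω] (M : SM Ω n ℓ)
    (𝓕 : Fin (ℓ+1) → MeasurableSpace Ω) (μ : Measure Ω) : Set (Tri Ω n ℓ) :=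
  {z | M.memD 𝓕 z.1 z.2.1 z.2.2 ∧ M.Ψmap 𝓕 μ z = z}

/-- Standing assumptions of the single-maturity model. -/
structure Valid [MeasurableSpace Ω] (M : SM Ω n ℓ)
    (𝓕 : Fin (ℓ+1) → MeasurableSpace Ω) (μ : Measure Ω) : Prop where
  hn : 1 ≤ n
  hTop : (inferInstance : MeasurableSpace Ω) = ⊤
  hprob : IsProbabilityMeasure μ
  hpos : ∀ ω : Ω, 0 < μ {ω}
  hmono : Monotone 𝓕
  h0 : 𝓕 0 = ⊥
  hlast : 𝓕 (Fin.last ℓ) = (inferInstance : MeasurableSpace Ω)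
  ht : StrictMono M.t
  ht0 : M.t 0 = 0
  htT : M.t (Fin.last ℓ) = M.T
  hx : ∀ l i, Measurable[𝓕 l] fun ω => M.x l ω i
  hx0 : ∀ l ω i, 0 ≤ M.x l ω i
  hL : ∀ i j, 0 ≤ M.L i j
  hLd : ∀ i, M.L i i = 0
  hL0 : ∀ i, 0 ≤ M.L0 i
  hβ0 : 0 ≤ M.β
  hβ1 : M.β ≤ 1
  hr : 0 ≤ M.r

end SM

namespace SM

/-- the historical-price-accounting survival component `Ψ^{H,T}_P`: the indicator `1{τ_i > t_l}` -/
noncomputable def ΨPH (M : SM Ω n ℓ) (τ : Fin n → Ω → ℝ) (l : Fin (ℓ+1))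
    (ω : Ω) (i : Fin n) : ℝ :=
  indR (M.t l < τ i ω)

/-- the historical price accounting clearing map `Ψ^{H,T}` -/
noncomputable def ΨmapH (M : SM Ω n ℓ) (z : Tri Ω n ℓ) : Tri Ω n ℓ :=
  (fun l ω i => M.ΨK l (z.2.1 l) ω i,
   fun l ω i => M.ΨPH z.2.2 l ω i,
   fun i ω => M.Ψτ z.1 i ω)

/-- the set of historical price accounting clearing solutions: fixed points of `Ψ^{H,T}` in `𝔻^T` -/
def clearingSetH [MeasurableSpace Ω] (M : SM Ω n ℓ)
    (𝓕 : Fin (ℓ+1) → MeasurableSpace Ω) : Set (Tri Ω n ℓ) :=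
  {z | M.memD 𝓕 z.1 z.2.1 z.2.2 ∧ M.ΨmapH z = z}

end SM

section Aux1
variable {Ω : Type*} [Fintype Ω] {n ℓ : ℕ}

set_option linter.unusedSectionVars false

lemma indR_nonneg (p : Prop) : 0 ≤ indR p := by
  unfold indR; split <;> norm_num

lemma indR_le_one (p : Prop) : indR p ≤ 1 := by
  unfold indR; split <;> norm_num

lemma indR_mono {p q : Prop} (h : p → q) : indR p ≤ indR q := by
  unfold indR; split_ifs with h1 h2
  · norm_num
  · exact absurd (h h1) h2
  · norm_num
  · norm_num

lemma indR_congr {p q : Prop} (h : p ↔ q) : indR p = indR q := by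
  classical
  unfold indR; exact if_congr h rfl rfl

lemma mem_atomOf_self (m : MeasurableSpace Ω) (ω : Ω) : ω ∈ atomOf m ω :=
  fun _ hs => hs.2

lemma measurableSet_atomOf (m : MeasurableSpace Ω) (ω : Ω) :
    MeasurableSet[m] (atomOf m ω) :=
  MeasurableSet.sInter (Set.toFinite _).countable (fun _ ht => ht.1)

lemma atomOf_mono {m m' : MeasurableSpace Ω} (h : m ≤ m') (ω : Ω) :
    atomOf m' ω ⊆ atomOf m ω :=
  Set.sInter_subset_sInter (fun s ⟨hs, hω⟩ => ⟨h s hs, hω⟩)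

lemma measurable_iff_atomOf {m : MeasurableSpace Ω} {f : Ω → ℝ} :
    Measurable[m] f ↔ ∀ ω ω', ω' ∈ atomOf m ω → f ω' = f ω := by
  constructor
  · intro hf ω ω' hω'
    exact hω' _ ⟨hf (measurableSet_singleton (f ω)), rfl⟩
  · intro h s _
    have : f ⁻¹' s = ⋃ ω ∈ f ⁻¹' s, atomOf m ω := by
      ext ω'; constructor
      · intro hω'; exact Set.mem_biUnion hω' (mem_atomOf_self m ω')
      · intro hx
        rw [Set.mem_iUnion₂] at hx
        obtain ⟨ω, hω, hmem⟩ := hx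
        have := h ω ω' hmem
        simpa [Set.mem_preimage, this] using hω
    rw [this]
    exact MeasurableSet.biUnion (Set.toFinite _).countable
      (fun ω _ => measurableSet_atomOf m ω)

lemma indR_stronglyMeasurable {m : MeasurableSpace Ω} {p : Ω → Prop}
    (hp : MeasurableSet[m] {ω | p ω}) :
    StronglyMeasurable[m] fun ω => indR (p ω) := by
  classical
  have h : (fun ω => indR (p ω)) = Set.indicator {ω | p ω} (fun _ => (1:ℝ)) := by
    funext ω; by_cases h : p ω <;> simp [indR, h, Set.indicator]
  rw [h]
  exact (@MeasureTheory.stronglyMeasurable_const Ω ℝ m _ 1).indicator hp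

end Aux1

section Aux2
variable {Ω : Type*} [Fintype Ω] [MeasurableSpace Ω]
  {μ : MeasureTheory.Measure Ω}

set_option linter.unusedSectionVars false

lemma all_of_ae (hpos : ∀ ω : Ω, 0 < μ {ω}) {p : Ω → Prop}
    (h : ∀ᵐ ω ∂μ, p ω) (ω : Ω) : p ω := by
  by_contra hc
  have h1 : μ {ω} ≤ μ {x | ¬ p x} := measure_mono (by simp [hc])
  rw [MeasureTheory.ae_iff] at h
  exact (hpos ω).ne' (le_antisymm (h1.trans (le_of_eq h)) zero_le)

lemma int_all (hTop : (inferInstance : MeasurableSpace Ω) = ⊤)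
    (hprob : MeasureTheory.IsProbabilityMeasure μ) (f : Ω → ℝ) :
    MeasureTheory.Integrable f μ := by
  haveI : MeasurableSingletonClass Ω := ⟨fun a => by
    have h : MeasurableSet[⊤] {a} := trivial
    rwa [← hTop] at h⟩
  haveI := hprob
  exact MeasureTheory.Integrable.of_finite

end Aux2


section Aux3
variable {Ω : Type*} [Fintype Ω] [MeasurableSpace Ω] {n ℓ : ℕ}
  {M : SM Ω n ℓ} {𝓕 : Fin (ℓ+1) → MeasurableSpace Ω} {μ : MeasureTheory.Measure Ω}

set_option linter.unusedSectionVars false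

lemma disc_nonneg (M : SM Ω n ℓ) (l : Fin (ℓ+1)) : 0 ≤ M.disc l := (Real.exp_pos _).le

lemma tle (hM : M.Valid 𝓕 μ) (l : Fin (ℓ+1)) : M.t l ≤ M.T :=
  hM.htT ▸ hM.ht.monotone (Fin.le_last l)

lemma t_lt_T1 (hM : M.Valid 𝓕 μ) (l : Fin (ℓ+1)) : M.t l < M.T + 1 :=
  (tle hM l).trans_lt (lt_add_one _)

/-- the set whose infimum defines `Ψτ` -/
def τset (M : SM Ω n ℓ) (K : Fin (ℓ+1) → Ω → Fin n → ℝ) (i : Fin n) (ω : Ω) : Set ℝ :=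
  insert (M.T + 1) ((fun l => M.t l) '' {l : Fin (ℓ+1) | K l ω i < 0})

lemma Ψτ_eq (K : Fin (ℓ+1) → Ω → Fin n → ℝ) (i : Fin n) (ω : Ω) :
    M.Ψτ K i ω = sInf (τset M K i ω) := rfl

lemma τset_fin (K : Fin (ℓ+1) → Ω → Fin n → ℝ) (i : Fin n) (ω : Ω) :
    (τset M K i ω).Finite := ((Set.toFinite _).image _).insert _

lemma τset_ne (K : Fin (ℓ+1) → Ω → Fin n → ℝ) (i : Fin n) (ω : Ω) :
    (τset M K i ω).Nonempty := ⟨_, Set.mem_insert _ _⟩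

lemma Ψτ_mem (K : Fin (ℓ+1) → Ω → Fin n → ℝ) (i : Fin n) (ω : Ω) :
    M.Ψτ K i ω ∈ τset M K i ω := (τset_ne K i ω).csInf_mem (τset_fin K i ω)

lemma Ψτ_le {K : Fin (ℓ+1) → Ω → Fin n → ℝ} {i : Fin n} {ω : Ω} {x : ℝ}
    (hx : x ∈ τset M K i ω) : M.Ψτ K i ω ≤ x :=
  csInf_le (τset_fin K i ω).bddBelow hx

lemma le_Ψτ {K : Fin (ℓ+1) → Ω → Fin n → ℝ} {i : Fin n} {ω : Ω} {c : ℝ}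
    (h : ∀ x ∈ τset M K i ω, c ≤ x) : c ≤ M.Ψτ K i ω :=
  le_csInf (τset_ne K i ω) h

lemma Ψτ_le_T1 {K : Fin (ℓ+1) → Ω → Fin n → ℝ} {i : Fin n} {ω : Ω} :
    M.Ψτ K i ω ≤ M.T + 1 := Ψτ_le (Set.mem_insert _ _)

lemma Ψτ_range (K : Fin (ℓ+1) → Ω → Fin n → ℝ) (i : Fin n) (ω : Ω) :
    (∃ l, M.Ψτ K i ω = M.t l) ∨ M.Ψτ K i ω = M.T + 1 := by
  rcases Set.mem_insert_iff.mp (Ψτ_mem (M := M) K i ω) with h | h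
  · exact Or.inr h
  · obtain ⟨k, _, hk⟩ := h
    exact Or.inl ⟨k, hk.symm⟩

lemma t0_le_Ψτ (hM : M.Valid 𝓕 μ) (K : Fin (ℓ+1) → Ω → Fin n → ℝ) (i : Fin n) (ω : Ω) :
    M.t 0 ≤ M.Ψτ K i ω := by
  apply le_Ψτ
  rintro x hx
  rcases Set.mem_insert_iff.mp hx with rfl | ⟨k, _, rfl⟩
  · exact (t_lt_T1 hM 0).le
  · exact hM.ht.monotone (Fin.zero_le k)

lemma lt_Ψτ_iff (hM : M.Valid 𝓕 μ) {K : Fin (ℓ+1) → Ω → Fin n → ℝ} {l : Fin (ℓ+1)}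
    {i : Fin n} {ω : Ω} :
    M.t l < M.Ψτ K i ω ↔ ∀ k ≤ l, 0 ≤ K k ω i := by
  constructor
  · intro h k hk
    by_contra hneg
    push_neg at hneg
    have hmem : M.t k ∈ τset M K i ω := Set.mem_insert_of_mem _ ⟨k, hneg, rfl⟩
    exact absurd ((Ψτ_le hmem).trans (hM.ht.monotone hk)) (not_le.mpr h)
  · intro h
    rcases Set.mem_insert_iff.mp (Ψτ_mem (M := M) K i ω) with he | ⟨k, hk, he⟩
    · rw [he]; exact t_lt_T1 hM l
    · have hlk : l < k := by
        by_contra hc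
        push_neg at hc
        exact absurd (h k hc) (not_le.mpr hk)
      calc M.t l < M.t k := hM.ht hlk
        _ = M.Ψτ K i ω := he

lemma Ψτ_mono {K K' : Fin (ℓ+1) → Ω → Fin n → ℝ}
    (h : ∀ k ω i, K k ω i ≤ K' k ω i) (i : Fin n) (ω : Ω) :
    M.Ψτ K i ω ≤ M.Ψτ K' i ω := by
  apply le_Ψτ
  rintro x hx
  rcases Set.mem_insert_iff.mp hx with rfl | ⟨k, hk, rfl⟩
  · exact Ψτ_le_T1
  · exact Ψτ_le (Set.mem_insert_of_mem _ ⟨k, (h k ω i).trans_lt hk, rfl⟩)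

lemma ΨK_mono (hM : M.Valid 𝓕 μ) {Pt Pt' : Ω → Fin n → ℝ} (h : ∀ ω j, Pt ω j ≤ Pt' ω j)
    (l : Fin (ℓ+1)) (ω : Ω) (i : Fin n) : M.ΨK l Pt ω i ≤ M.ΨK l Pt' ω i := by
  unfold SM.ΨK
  have h1 : ∀ j : Fin n, M.L j i * (M.β + (1 - M.β) * Pt ω j)
      ≤ M.L j i * (M.β + (1 - M.β) * Pt' ω j) := by
    intro j
    apply mul_le_mul_of_nonneg_left _ (hM.hL j i)
    have : (1 - M.β) * Pt ω j ≤ (1 - M.β) * Pt' ω j :=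
      mul_le_mul_of_nonneg_left (h ω j) (by linarith [hM.hβ1])
    linarith
  have h2 : (∑ j, M.L j i * (M.β + (1 - M.β) * Pt ω j))
      ≤ ∑ j, M.L j i * (M.β + (1 - M.β) * Pt' ω j) :=
    Finset.sum_le_sum fun j _ => h1 j
  have h3 := mul_le_mul_of_nonneg_left h2 (disc_nonneg M l)
  linarith [h3]

lemma ΨK_lb (hM : M.Valid 𝓕 μ) {Pt : Ω → Fin n → ℝ} (h0 : ∀ ω j, 0 ≤ Pt ω j)
    (l : Fin (ℓ+1)) (ω : Ω) (i : Fin n) :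
    M.x l ω i - M.disc l * M.pbar i ≤ M.ΨK l Pt ω i := by
  unfold SM.ΨK
  have h1 : (0:ℝ) ≤ ∑ j, M.L j i * (M.β + (1 - M.β) * Pt ω j) :=
    Finset.sum_nonneg fun j _ => mul_nonneg (hM.hL j i)
      (add_nonneg hM.hβ0 (mul_nonneg (by linarith [hM.hβ1]) (h0 ω j)))
  nlinarith [mul_nonneg (disc_nonneg M l) h1]

lemma ΨK_ub (hM : M.Valid 𝓕 μ) {Pt : Ω → Fin n → ℝ} (h1 : ∀ ω j, Pt ω j ≤ 1)
    (l : Fin (ℓ+1)) (ω : Ω) (i : Fin n) :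
    M.ΨK l Pt ω i ≤ M.x l ω i + M.disc l * ((∑ j, M.L j i) - M.pbar i) := by
  unfold SM.ΨK
  have hs : ∑ j, M.L j i * (M.β + (1 - M.β) * Pt ω j) ≤ ∑ j, M.L j i := by
    apply Finset.sum_le_sum
    intro j _
    have hb : M.β + (1 - M.β) * Pt ω j ≤ 1 := by
      nlinarith [mul_le_mul_of_nonneg_left (h1 ω j) (sub_nonneg.mpr hM.hβ1)]
    nlinarith [hM.hL j i]
  have h2 := mul_le_mul_of_nonneg_left hs (disc_nonneg M l)
  rw [mul_sub]
  linarith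

lemma ΨK_meas (hM : M.Valid 𝓕 μ) {Pt : Ω → Fin n → ℝ} (l : Fin (ℓ+1))
    (hP : ∀ j, Measurable[𝓕 l] fun ω => Pt ω j) (i : Fin n) :
    Measurable[𝓕 l] fun ω => M.ΨK l Pt ω i := by
  unfold SM.ΨK
  apply Measurable.sub _ measurable_const
  apply (hM.hx l i).add
  apply Measurable.const_mul
  apply Finset.measurable_sum
  intro j _
  exact (((hP j).const_mul _).const_add _).const_mul _

lemma F_le_top (hM : M.Valid 𝓕 μ) (l : Fin (ℓ+1)) :
    𝓕 l ≤ (inferInstance : MeasurableSpace Ω) := by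
  rw [hM.hTop]; exact le_top

lemma ΨP_mono (hM : M.Valid 𝓕 μ) {τ τ' : Fin n → Ω → ℝ} (h : ∀ i ω, τ i ω ≤ τ' i ω)
    (l : Fin (ℓ+1)) (ω : Ω) (i : Fin n) :
    M.ΨP 𝓕 μ τ l ω i ≤ M.ΨP 𝓕 μ τ' l ω i := by
  unfold SM.ΨP
  haveI := hM.hprob
  have h0 := MeasureTheory.condExp_mono (m := 𝓕 l) (int_all hM.hTop hM.hprob
    (fun ω' => indR (M.T < τ i ω'))) (int_all hM.hTop hM.hprob (fun ω' => indR (M.T < τ' i ω')))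
    (Filter.Eventually.of_forall fun ω' => indR_mono fun hT => hT.trans_le (h i ω'))
  have h0' : ∀ᵐ ω ∂μ, (μ[fun ω' => indR (M.T < τ i ω')|𝓕 l]) ω
      ≤ (μ[fun ω' => indR (M.T < τ' i ω')|𝓕 l]) ω := h0
  exact all_of_ae hM.hpos h0' ω

lemma ΨP_nonneg (hM : M.Valid 𝓕 μ) (τ : Fin n → Ω → ℝ) (l : Fin (ℓ+1)) (ω : Ω) (i : Fin n) :
    0 ≤ M.ΨP 𝓕 μ τ l ω i := by
  unfold SM.ΨP
  haveI := hM.hprob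
  have h0 := MeasureTheory.condExp_nonneg (μ := μ) (m := 𝓕 l)
    (f := fun ω' => indR (M.T < τ i ω'))
    (Filter.Eventually.of_forall fun ω' => indR_nonneg _)
  have h0' : ∀ᵐ ω ∂μ, (0:ℝ) ≤ (μ[fun ω' => indR (M.T < τ i ω')|𝓕 l]) ω := h0
  exact all_of_ae hM.hpos h0' ω

lemma Ψτ_stopping (hM : M.Valid 𝓕 μ) {K : Fin (ℓ+1) → Ω → Fin n → ℝ}
    (hK : ∀ l i, Measurable[𝓕 l] fun ω => K l ω i) (l : Fin (ℓ+1)) (i : Fin n) :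
    MeasurableSet[𝓕 l] {ω | M.t l < M.Ψτ K i ω} := by
  have hset : {ω | M.t l < M.Ψτ K i ω} = ⋂ k, {ω | k ≤ l → 0 ≤ K k ω i} := by
    ext ω
    simp only [Set.mem_setOf_eq, Set.mem_iInter, lt_Ψτ_iff hM]
  rw [hset]
  apply MeasurableSet.iInter
  intro k
  by_cases hk : k ≤ l
  · have h2 : {ω | k ≤ l → 0 ≤ K k ω i} = (fun ω => K k ω i) ⁻¹' Set.Ici 0 := by
      ext ω; simp [hk]
    rw [h2]
    exact hM.hmono hk _ (hK k i measurableSet_Ici)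
  · have h2 : {ω | k ≤ l → 0 ≤ K k ω i} = Set.univ := by
      ext ω; simp [hk]
    rw [h2]; exact MeasurableSet.univ

lemma condexp_le_indR (hM : M.Valid 𝓕 μ) {τ : Fin n → Ω → ℝ} {l : Fin (ℓ+1)} {i : Fin n}
    (hst : MeasurableSet[𝓕 l] {ω | M.t l < τ i ω}) (ω : Ω) :
    M.ΨP 𝓕 μ τ l ω i ≤ indR (M.t l < τ i ω) := by
  unfold SM.ΨP
  haveI := hM.hprob
  have heq : μ[(fun ω' => indR (M.t l < τ i ω'))|𝓕 l] = fun ω' => indR (M.t l < τ i ω') :=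
    MeasureTheory.condExp_of_stronglyMeasurable (F_le_top hM l)
      (indR_stronglyMeasurable hst) (int_all hM.hTop hM.hprob _)
  have h0 := MeasureTheory.condExp_mono (m := 𝓕 l)
    (int_all hM.hTop hM.hprob (fun ω' => indR (M.T < τ i ω')))
    (int_all hM.hTop hM.hprob (fun ω' => indR (M.t l < τ i ω')))
    (Filter.Eventually.of_forall fun ω' => indR_mono fun hT => lt_of_le_of_lt (tle hM l) hT)
  have h0' : ∀ᵐ ω ∂μ, (μ[fun ω' => indR (M.T < τ i ω')|𝓕 l]) ω
      ≤ (μ[fun ω' => indR (M.t l < τ i ω')|𝓕 l]) ω := h0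
  have h2 := all_of_ae hM.hpos h0' ω
  rw [heq] at h2
  exact h2

lemma tri_le_iff {w w' : Tri Ω n ℓ} :
    w ≤ w' ↔ (∀ l ω i, w.1 l ω i ≤ w'.1 l ω i) ∧ (∀ l ω i, w.2.1 l ω i ≤ w'.2.1 l ω i) ∧
      (∀ i ω, w.2.2 i ω ≤ w'.2.2 i ω) := by
  constructor
  · rintro ⟨h1, h2, h3⟩
    exact ⟨fun l ω i => h1 l ω i, fun l ω i => h2 l ω i, fun i ω => h3 i ω⟩
  · rintro ⟨h1, h2, h3⟩
    exact ⟨fun l ω i => h1 l ω i, fun l ω i => h2 l ω i, fun i ω => h3 i ω⟩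

lemma Ψmap_mono (hM : M.Valid 𝓕 μ) {w w' : Tri Ω n ℓ} (h : w ≤ w') :
    M.Ψmap 𝓕 μ w ≤ M.Ψmap 𝓕 μ w' := by
  obtain ⟨h1, h2, h3⟩ := tri_le_iff.mp h
  refine tri_le_iff.mpr ⟨?_, ?_, ?_⟩
  · intro l ω i; exact ΨK_mono hM (fun ω j => h2 l ω j) l ω i
  · intro l ω i; exact ΨP_mono hM (fun i ω => h3 i ω) l ω i
  · intro i ω; exact Ψτ_mono (fun k ω i => h1 k ω i) i ω

lemma ΨmapH_mono (hM : M.Valid 𝓕 μ) {w w' : Tri Ω n ℓ} (h : w ≤ w') :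
    M.ΨmapH w ≤ M.ΨmapH w' := by
  obtain ⟨h1, h2, h3⟩ := tri_le_iff.mp h
  refine tri_le_iff.mpr ⟨?_, ?_, ?_⟩
  · intro l ω i; exact ΨK_mono hM (fun ω j => h2 l ω j) l ω i
  · intro l ω i
    show indR _ ≤ indR _
    exact indR_mono fun ht => ht.trans_le (h3 i ω)
  · intro i ω; exact Ψτ_mono (fun k ω i => h1 k ω i) i ω

end Aux3


section Dir2
variable {Ω : Type*} [Fintype Ω] [MeasurableSpace Ω] {n ℓ : ℕ}
  {M : SM Ω n ℓ} {𝓕 : Fin (ℓ+1) → MeasurableSpace Ω} {μ : MeasureTheory.Measure Ω}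

set_option linter.unusedSectionVars false
set_option maxHeartbeats 1000000

lemma dir2 (hM : M.Valid 𝓕 μ) (zH : Tri Ω n ℓ) (hzH : zH ∈ M.clearingSetH 𝓕) :
    ∃ z ∈ M.clearingSet 𝓕 μ, z ≤ zH := by
  classical
  obtain ⟨hD, hfix⟩ := hzH
  obtain ⟨hKm, hPm, hKlb, hKub, hPb, hτr⟩ := hD
  have hKfix : ∀ l ω i, M.ΨK l (zH.2.1 l) ω i = zH.1 l ω i := fun l ω i =>
    congrFun (congrFun (congrFun (congrArg Prod.fst hfix) l) ω) i
  have hPfix : ∀ l ω i, M.ΨPH zH.2.2 l ω i = zH.2.1 l ω i := fun l ω i =>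
    congrFun (congrFun (congrFun (congrArg (fun w : Tri Ω n ℓ => w.2.1) hfix) l) ω) i
  have hτfix : ∀ i ω, M.Ψτ zH.1 i ω = zH.2.2 i ω := fun i ω =>
    congrFun (congrFun (congrArg (fun w : Tri Ω n ℓ => w.2.2) hfix) i) ω
  set a : Tri Ω n ℓ := (fun l ω i => M.x l ω i - M.disc l * M.pbar i,
    fun _ _ _ => (0:ℝ), fun _ _ => M.t 0) with ha
  have haF : a ≤ M.Ψmap 𝓕 μ a := by
    refine tri_le_iff.mpr ⟨?_, ?_, ?_⟩
    · intro l ω i; exact ΨK_lb hM (fun _ _ => le_refl 0) l ω i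
    · intro l ω i; exact ΨP_nonneg hM _ l ω i
    · intro i ω; exact t0_le_Ψτ hM _ i ω
  have haH : a ≤ zH := by
    refine tri_le_iff.mpr ⟨?_, ?_, ?_⟩
    · intro l ω i; exact hKlb l ω i
    · intro l ω i; exact (hPb l ω i).1
    · intro i ω
      calc a.2.2 i ω = M.t 0 := rfl
        _ ≤ M.Ψτ zH.1 i ω := t0_le_Ψτ hM _ i ω
        _ = zH.2.2 i ω := hτfix i ω
  have hFzH : M.Ψmap 𝓕 μ zH ≤ zH := by
    refine tri_le_iff.mpr ⟨?_, ?_, ?_⟩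
    · intro l ω i; exact le_of_eq (hKfix l ω i)
    · intro l ω i
      have hst : MeasurableSet[𝓕 l] {ω | M.t l < zH.2.2 i ω} := by
        have heq : {ω | M.t l < zH.2.2 i ω} = {ω | M.t l < M.Ψτ zH.1 i ω} := by
          ext ω'; simp only [Set.mem_setOf_eq, hτfix i ω']
        rw [heq]
        exact Ψτ_stopping hM hKm l i
      calc M.ΨP 𝓕 μ zH.2.2 l ω i ≤ indR (M.t l < zH.2.2 i ω) := condexp_le_indR hM hst ω
        _ = zH.2.1 l ω i := hPfix l ω i
    · intro i ω; exact le_of_eq (hτfix i ω)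
  set S : Set (Tri Ω n ℓ) := {w | a ≤ w ∧ w ≤ zH ∧ w ≤ M.Ψmap 𝓕 μ w} with hSdef
  have hmemS : ∀ w : Tri Ω n ℓ, w ∈ S ↔ a ≤ w ∧ w ≤ zH ∧ w ≤ M.Ψmap 𝓕 μ w := fun w => Iff.rfl
  have haS : a ∈ S := (hmemS a).mpr ⟨le_refl a, haH, haF⟩
  have hSne : S.Nonempty := ⟨a, haS⟩
  set z : Tri Ω n ℓ :=
    (fun l ω i => sSup ((fun w : Tri Ω n ℓ => w.1 l ω i) '' S),
     fun l ω i => sSup ((fun w : Tri Ω n ℓ => w.2.1 l ω i) '' S),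
     fun i ω => sSup ((fun w : Tri Ω n ℓ => w.2.2 i ω) '' S)) with hz
  have hbddK : ∀ l ω i, BddAbove ((fun w : Tri Ω n ℓ => w.1 l ω i) '' S) := fun l ω i =>
    ⟨zH.1 l ω i, by rintro x ⟨w, hw, rfl⟩; exact (tri_le_iff.mp ((hmemS w).mp hw).2.1).1 l ω i⟩
  have hbddP : ∀ l ω i, BddAbove ((fun w : Tri Ω n ℓ => w.2.1 l ω i) '' S) := fun l ω i =>
    ⟨zH.2.1 l ω i, by rintro x ⟨w, hw, rfl⟩; exact (tri_le_iff.mp ((hmemS w).mp hw).2.1).2.1 l ω i⟩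
  have hbddτ : ∀ i ω, BddAbove ((fun w : Tri Ω n ℓ => w.2.2 i ω) '' S) := fun i ω =>
    ⟨zH.2.2 i ω, by rintro x ⟨w, hw, rfl⟩; exact (tri_le_iff.mp ((hmemS w).mp hw).2.1).2.2 i ω⟩
  have hub : ∀ w ∈ S, w ≤ z := fun w hw => tri_le_iff.mpr
    ⟨fun l ω i => le_csSup (hbddK l ω i) ⟨w, hw, rfl⟩,
     fun l ω i => le_csSup (hbddP l ω i) ⟨w, hw, rfl⟩,
     fun i ω => le_csSup (hbddτ i ω) ⟨w, hw, rfl⟩⟩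
  have hlub : ∀ b : Tri Ω n ℓ, (∀ w ∈ S, w ≤ b) → z ≤ b := fun b hb => tri_le_iff.mpr
    ⟨fun l ω i => csSup_le (hSne.image _)
        (by rintro x ⟨w, hw, rfl⟩; exact (tri_le_iff.mp (hb w hw)).1 l ω i),
     fun l ω i => csSup_le (hSne.image _)
        (by rintro x ⟨w, hw, rfl⟩; exact (tri_le_iff.mp (hb w hw)).2.1 l ω i),
     fun i ω => csSup_le (hSne.image _)
        (by rintro x ⟨w, hw, rfl⟩; exact (tri_le_iff.mp (hb w hw)).2.2 i ω)⟩
  have hzH2 : z ≤ zH := hlub zH (fun w hw => ((hmemS w).mp hw).2.1)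
  have hzF : z ≤ M.Ψmap 𝓕 μ z := hlub _ (fun w hw =>
    (((hmemS w).mp hw).2.2).trans (Ψmap_mono hM (hub w hw)))
  have hFS : M.Ψmap 𝓕 μ z ∈ S := (hmemS _).mpr
    ⟨haF.trans (Ψmap_mono hM (hub a haS)), (Ψmap_mono hM hzH2).trans hFzH, Ψmap_mono hM hzF⟩
  have hfix2 : M.Ψmap 𝓕 μ z = z := le_antisymm (hub _ hFS) hzF
  have hK2 : ∀ l ω i, M.ΨK l (z.2.1 l) ω i = z.1 l ω i := fun l ω i =>
    congrFun (congrFun (congrFun (congrArg Prod.fst hfix2) l) ω) i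
  have hP2 : ∀ l ω i, M.ΨP 𝓕 μ z.2.2 l ω i = z.2.1 l ω i := fun l ω i =>
    congrFun (congrFun (congrFun (congrArg (fun w : Tri Ω n ℓ => w.2.1) hfix2) l) ω) i
  have hτ2 : ∀ i ω, M.Ψτ z.1 i ω = z.2.2 i ω := fun i ω =>
    congrFun (congrFun (congrArg (fun w : Tri Ω n ℓ => w.2.2) hfix2) i) ω
  have hPz0 : ∀ l ω i, (0:ℝ) ≤ z.2.1 l ω i := fun l ω i => (tri_le_iff.mp (hub a haS)).2.1 l ω i
  have hPz1 : ∀ l ω i, z.2.1 l ω i ≤ 1 := fun l ω i =>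
    ((tri_le_iff.mp hzH2).2.1 l ω i).trans (hPb l ω i).2
  have hPmeas : ∀ l j, Measurable[𝓕 l] fun ω => z.2.1 l ω j := by
    intro l j
    have he : (fun ω => z.2.1 l ω j)
        = fun ω => (μ[fun ω' => indR (M.T < z.2.2 j ω')|𝓕 l]) ω := by
      funext ω; exact (hP2 l ω j).symm
    rw [he]
    exact MeasureTheory.stronglyMeasurable_condExp.measurable
  refine ⟨z, ⟨⟨?_, hPmeas, ?_, ?_, ?_, ?_⟩, hfix2⟩, hzH2⟩
  · intro l i
    have he : (fun ω => z.1 l ω i) = fun ω => M.ΨK l (z.2.1 l) ω i := by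
      funext ω; exact (hK2 l ω i).symm
    rw [he]
    exact ΨK_meas hM l (hPmeas l) i
  · intro l ω i
    rw [← hK2 l ω i]
    exact ΨK_lb hM (fun ω j => hPz0 l ω j) l ω i
  · intro l ω i
    rw [← hK2 l ω i]
    exact ΨK_ub hM (fun ω j => hPz1 l ω j) l ω i
  · intro l ω i; exact ⟨hPz0 l ω i, hPz1 l ω i⟩
  · intro i ω
    rw [← hτ2 i ω]
    exact Ψτ_range z.1 i ω

end Dir2


section Dir1
variable {Ω : Type*} [Fintype Ω] [MeasurableSpace Ω] {n ℓ : ℕ}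
  {M : SM Ω n ℓ} {𝓕 : Fin (ℓ+1) → MeasurableSpace Ω} {μ : MeasureTheory.Measure Ω}

set_option linter.unusedSectionVars false
set_option maxHeartbeats 1000000

lemma dir1 (hM : M.Valid 𝓕 μ) (z : Tri Ω n ℓ) (hz : z ∈ M.clearingSet 𝓕 μ) :
    ∃ zH ∈ M.clearingSetH 𝓕, z ≤ zH := by
  classical
  obtain ⟨hD, hfix⟩ := hz
  obtain ⟨hKm, hPm, hKlb, hKub, hPb, hτr⟩ := hD
  have hKfix : ∀ l ω i, M.ΨK l (z.2.1 l) ω i = z.1 l ω i := fun l ω i =>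
    congrFun (congrFun (congrFun (congrArg Prod.fst hfix) l) ω) i
  have hPfix : ∀ l ω i, M.ΨP 𝓕 μ z.2.2 l ω i = z.2.1 l ω i := fun l ω i =>
    congrFun (congrFun (congrFun (congrArg (fun w : Tri Ω n ℓ => w.2.1) hfix) l) ω) i
  have hτfix : ∀ i ω, M.Ψτ z.1 i ω = z.2.2 i ω := fun i ω =>
    congrFun (congrFun (congrArg (fun w : Tri Ω n ℓ => w.2.2) hfix) i) ω
  have hxconst : ∀ l i ω ω', ω' ∈ atomOf (𝓕 l) ω → M.x l ω' i = M.x l ω i :=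
    fun l i => measurable_iff_atomOf.mp (hM.hx l i)
  -- the top element
  set b : Tri Ω n ℓ := (fun l ω i => M.x l ω i + M.disc l * ((∑ j, M.L j i) - M.pbar i),
    fun _ _ _ => (1:ℝ), fun _ _ => M.T + 1) with hb
  -- preservation of the constancy conditions by ΨmapH
  have hC : ∀ w : Tri Ω n ℓ,
      (∀ l i ω ω', ω' ∈ atomOf (𝓕 l) ω → w.1 l ω' i = w.1 l ω i) →
      (∀ l i ω ω', ω' ∈ atomOf (𝓕 l) ω → w.2.1 l ω' i = w.2.1 l ω i) →
      (∀ l i ω ω', ω' ∈ atomOf (𝓕 l) ω → (M.t l < w.2.2 i ω' ↔ M.t l < w.2.2 i ω)) →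
      ((∀ l i ω ω', ω' ∈ atomOf (𝓕 l) ω → (M.ΨmapH w).1 l ω' i = (M.ΨmapH w).1 l ω i) ∧
       (∀ l i ω ω', ω' ∈ atomOf (𝓕 l) ω → (M.ΨmapH w).2.1 l ω' i = (M.ΨmapH w).2.1 l ω i) ∧
       (∀ l i ω ω', ω' ∈ atomOf (𝓕 l) ω →
          (M.t l < (M.ΨmapH w).2.2 i ω' ↔ M.t l < (M.ΨmapH w).2.2 i ω)) ∧
       (∀ i ω, (∃ k, (M.ΨmapH w).2.2 i ω = M.t k) ∨ (M.ΨmapH w).2.2 i ω = M.T + 1)) := by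
    intro w hCK hCP hCτ
    refine ⟨?_, ?_, ?_, ?_⟩
    · intro l i ω ω' hmem
      show M.ΨK l (w.2.1 l) ω' i = M.ΨK l (w.2.1 l) ω i
      unfold SM.ΨK
      have hsum : (∑ j, M.L j i * (M.β + (1 - M.β) * w.2.1 l ω' j))
          = ∑ j, M.L j i * (M.β + (1 - M.β) * w.2.1 l ω j) :=
        Finset.sum_congr rfl fun j _ => by rw [hCP l j ω ω' hmem]
      rw [hxconst l i ω ω' hmem, hsum]
    · intro l i ω ω' hmem
      show indR (M.t l < w.2.2 i ω') = indR (M.t l < w.2.2 i ω)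
      exact indR_congr (hCτ l i ω ω' hmem)
    · intro l i ω ω' hmem
      show M.t l < M.Ψτ w.1 i ω' ↔ M.t l < M.Ψτ w.1 i ω
      rw [lt_Ψτ_iff hM, lt_Ψτ_iff hM]
      constructor
      · intro h k hk
        rw [← hCK k i ω ω' (atomOf_mono (hM.hmono hk) ω hmem)]
        exact h k hk
      · intro h k hk
        rw [hCK k i ω ω' (atomOf_mono (hM.hmono hk) ω hmem)]
        exact h k hk
    · intro i ω
      exact Ψτ_range w.1 i ω
  set S : Set (Tri Ω n ℓ) := {w | z ≤ w ∧ w ≤ b ∧ M.ΨmapH w ≤ w ∧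
    (∀ l i ω ω', ω' ∈ atomOf (𝓕 l) ω → w.1 l ω' i = w.1 l ω i) ∧
    (∀ l i ω ω', ω' ∈ atomOf (𝓕 l) ω → w.2.1 l ω' i = w.2.1 l ω i) ∧
    (∀ l i ω ω', ω' ∈ atomOf (𝓕 l) ω → (M.t l < w.2.2 i ω' ↔ M.t l < w.2.2 i ω)) ∧
    (∀ i ω, (∃ k, w.2.2 i ω = M.t k) ∨ w.2.2 i ω = M.T + 1)} with hSdef
  have hmemS : ∀ w : Tri Ω n ℓ, w ∈ S ↔ (z ≤ w ∧ w ≤ b ∧ M.ΨmapH w ≤ w ∧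
    (∀ l i ω ω', ω' ∈ atomOf (𝓕 l) ω → w.1 l ω' i = w.1 l ω i) ∧
    (∀ l i ω ω', ω' ∈ atomOf (𝓕 l) ω → w.2.1 l ω' i = w.2.1 l ω i) ∧
    (∀ l i ω ω', ω' ∈ atomOf (𝓕 l) ω → (M.t l < w.2.2 i ω' ↔ M.t l < w.2.2 i ω)) ∧
    (∀ i ω, (∃ k, w.2.2 i ω = M.t k) ∨ w.2.2 i ω = M.T + 1)) := fun w => Iff.rfl
  -- z ≤ b
  have hzb : z ≤ b := by
    refine tri_le_iff.mpr ⟨?_, ?_, ?_⟩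
    · intro l ω i; exact hKub l ω i
    · intro l ω i; exact (hPb l ω i).2
    · intro i ω
      rw [← hτfix i ω]
      exact Ψτ_le_T1
  -- ΨmapH b ≤ b
  have hbF : M.ΨmapH b ≤ b := by
    refine tri_le_iff.mpr ⟨?_, ?_, ?_⟩
    · intro l ω i; exact ΨK_ub hM (fun _ _ => le_refl 1) l ω i
    · intro l ω i; exact indR_le_one _
    · intro i ω; exact Ψτ_le_T1
  have hbS : b ∈ S := by
    refine (hmemS b).mpr ⟨hzb, le_refl b, hbF, ?_, ?_, ?_, ?_⟩
    · intro l i ω ω' hmem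
      show M.x l ω' i + _ = M.x l ω i + _
      rw [hxconst l i ω ω' hmem]
    · intro l i ω ω' hmem; rfl
    · intro l i ω ω' hmem; exact Iff.rfl
    · intro i ω; exact Or.inr rfl
  have hSne : S.Nonempty := ⟨b, hbS⟩
  -- z ≤ ΨmapH z
  have hzF : z ≤ M.ΨmapH z := by
    refine tri_le_iff.mpr ⟨?_, ?_, ?_⟩
    · intro l ω i; exact le_of_eq (hKfix l ω i).symm
    · intro l ω i
      have hst : MeasurableSet[𝓕 l] {ω | M.t l < z.2.2 i ω} := by
        have heq : {ω | M.t l < z.2.2 i ω} = {ω | M.t l < M.Ψτ z.1 i ω} := by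
          ext ω'; simp only [Set.mem_setOf_eq, hτfix i ω']
        rw [heq]
        exact Ψτ_stopping hM hKm l i
      calc z.2.1 l ω i = M.ΨP 𝓕 μ z.2.2 l ω i := (hPfix l ω i).symm
        _ ≤ indR (M.t l < z.2.2 i ω) := condexp_le_indR hM hst ω
    · intro i ω; exact le_of_eq (hτfix i ω).symm
  -- the candidate: pointwise infimum over S
  set zs : Tri Ω n ℓ :=
    (fun l ω i => sInf ((fun w : Tri Ω n ℓ => w.1 l ω i) '' S),
     fun l ω i => sInf ((fun w : Tri Ω n ℓ => w.2.1 l ω i) '' S),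
     fun i ω => sInf ((fun w : Tri Ω n ℓ => w.2.2 i ω) '' S)) with hzs
  have hbddK : ∀ l ω i, BddBelow ((fun w : Tri Ω n ℓ => w.1 l ω i) '' S) := fun l ω i =>
    ⟨z.1 l ω i, by rintro x ⟨w, hw, rfl⟩; exact (tri_le_iff.mp ((hmemS w).mp hw).1).1 l ω i⟩
  have hbddP : ∀ l ω i, BddBelow ((fun w : Tri Ω n ℓ => w.2.1 l ω i) '' S) := fun l ω i =>
    ⟨z.2.1 l ω i, by rintro x ⟨w, hw, rfl⟩; exact (tri_le_iff.mp ((hmemS w).mp hw).1).2.1 l ω i⟩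
  have hbddτ : ∀ i ω, BddBelow ((fun w : Tri Ω n ℓ => w.2.2 i ω) '' S) := fun i ω =>
    ⟨z.2.2 i ω, by rintro x ⟨w, hw, rfl⟩; exact (tri_le_iff.mp ((hmemS w).mp hw).1).2.2 i ω⟩
  have hlb : ∀ w ∈ S, zs ≤ w := fun w hw => tri_le_iff.mpr
    ⟨fun l ω i => csInf_le (hbddK l ω i) ⟨w, hw, rfl⟩,
     fun l ω i => csInf_le (hbddP l ω i) ⟨w, hw, rfl⟩,
     fun i ω => csInf_le (hbddτ i ω) ⟨w, hw, rfl⟩⟩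
  have hglb : ∀ c : Tri Ω n ℓ, (∀ w ∈ S, c ≤ w) → c ≤ zs := fun c hc => tri_le_iff.mpr
    ⟨fun l ω i => le_csInf (hSne.image _)
        (by rintro x ⟨w, hw, rfl⟩; exact (tri_le_iff.mp (hc w hw)).1 l ω i),
     fun l ω i => le_csInf (hSne.image _)
        (by rintro x ⟨w, hw, rfl⟩; exact (tri_le_iff.mp (hc w hw)).2.1 l ω i),
     fun i ω => le_csInf (hSne.image _)
        (by rintro x ⟨w, hw, rfl⟩; exact (tri_le_iff.mp (hc w hw)).2.2 i ω)⟩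
  have hzzs : z ≤ zs := hglb z (fun w hw => ((hmemS w).mp hw).1)
  have hzsb : zs ≤ b := hlb b hbS
  -- finiteness of the τ images
  have himgfin : ∀ i ω, ((fun w : Tri Ω n ℓ => w.2.2 i ω) '' S).Finite := by
    intro i ω
    apply Set.Finite.subset (((Set.finite_range M.t).insert (M.T + 1)))
    rintro x ⟨w, hw, rfl⟩
    show w.2.2 i ω ∈ _
    rcases ((hmemS w).mp hw).2.2.2.2.2.2 i ω with ⟨k, hk⟩ | hk
    · exact Set.mem_insert_of_mem _ ⟨k, hk.symm⟩
    · rw [hk]; exact Set.mem_insert _ _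
  -- characterization of strict inequalities for the infimum τ
  have hτchar : ∀ (l : Fin (ℓ+1)) (i : Fin n) (ω : Ω),
      (M.t l < zs.2.2 i ω ↔ ∀ w ∈ S, M.t l < w.2.2 i ω) := by
    intro l i ω
    constructor
    · intro h w hw
      exact lt_of_lt_of_le h (csInf_le (hbddτ i ω) ⟨w, hw, rfl⟩)
    · intro h
      obtain ⟨w, hw, he⟩ := (hSne.image (fun w : Tri Ω n ℓ => w.2.2 i ω)).csInf_mem (himgfin i ω)
      show M.t l < sInf ((fun w : Tri Ω n ℓ => w.2.2 i ω) '' S)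
      rw [← he]
      exact h w hw
  -- the constancy conditions for zs
  have hCKzs : ∀ l i ω ω', ω' ∈ atomOf (𝓕 l) ω → zs.1 l ω' i = zs.1 l ω i := by
    intro l i ω ω' hmem
    show sInf _ = sInf _
    rw [Set.image_congr (fun w hw => ((hmemS w).mp hw).2.2.2.1 l i ω ω' hmem)]
  have hCPzs : ∀ l i ω ω', ω' ∈ atomOf (𝓕 l) ω → zs.2.1 l ω' i = zs.2.1 l ω i := by
    intro l i ω ω' hmem
    show sInf _ = sInf _
    rw [Set.image_congr (fun w hw => ((hmemS w).mp hw).2.2.2.2.1 l i ω ω' hmem)]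
  have hCτzs : ∀ l i ω ω', ω' ∈ atomOf (𝓕 l) ω →
      (M.t l < zs.2.2 i ω' ↔ M.t l < zs.2.2 i ω) := by
    intro l i ω ω' hmem
    rw [hτchar l i ω, hτchar l i ω']
    constructor
    · intro h w hw
      exact (((hmemS w).mp hw).2.2.2.2.2.1 l i ω ω' hmem).mp (h w hw)
    · intro h w hw
      exact (((hmemS w).mp hw).2.2.2.2.2.1 l i ω ω' hmem).mpr (h w hw)
  have hCRzs : ∀ i ω, (∃ k, zs.2.2 i ω = M.t k) ∨ zs.2.2 i ω = M.T + 1 := by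
    intro i ω
    obtain ⟨w, hw, he⟩ := (hSne.image (fun w : Tri Ω n ℓ => w.2.2 i ω)).csInf_mem (himgfin i ω)
    have he2 : zs.2.2 i ω = w.2.2 i ω := he.symm
    rw [he2]
    exact ((hmemS w).mp hw).2.2.2.2.2.2 i ω
  -- Knaster–Tarski closing
  have hFle : M.ΨmapH zs ≤ zs := hglb _ (fun w hw =>
    (ΨmapH_mono hM (hlb w hw)).trans ((hmemS w).mp hw).2.2.1)
  have hCF := hC zs hCKzs hCPzs hCτzs
  have hFS : M.ΨmapH zs ∈ S := (hmemS _).mpr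
    ⟨hzF.trans (ΨmapH_mono hM hzzs), (ΨmapH_mono hM hzsb).trans hbF, ΨmapH_mono hM hFle,
     hCF.1, hCF.2.1, hCF.2.2.1, hCF.2.2.2⟩
  have hfix2 : M.ΨmapH zs = zs := le_antisymm hFle (hlb _ hFS)
  -- componentwise fixed point equalities
  have hK2 : ∀ l ω i, M.ΨK l (zs.2.1 l) ω i = zs.1 l ω i := fun l ω i =>
    congrFun (congrFun (congrFun (congrArg Prod.fst hfix2) l) ω) i
  have hτ2 : ∀ i ω, M.Ψτ zs.1 i ω = zs.2.2 i ω := fun i ω =>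
    congrFun (congrFun (congrArg (fun w : Tri Ω n ℓ => w.2.2) hfix2) i) ω
  -- bounds on the P component
  have hPz0 : ∀ l ω i, (0:ℝ) ≤ zs.2.1 l ω i := fun l ω i =>
    le_trans (hPb l ω i).1 ((tri_le_iff.mp hzzs).2.1 l ω i)
  have hPz1 : ∀ l ω i, zs.2.1 l ω i ≤ 1 := fun l ω i => (tri_le_iff.mp hzsb).2.1 l ω i
  refine ⟨zs, ⟨⟨?_, ?_, ?_, ?_, ?_, hCRzs⟩, hfix2⟩, hzzs⟩
  · intro l i
    exact measurable_iff_atomOf.mpr (fun ω ω' hmem => hCKzs l i ω ω' hmem)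
  · intro l i
    exact measurable_iff_atomOf.mpr (fun ω ω' hmem => hCPzs l i ω ω' hmem)
  · intro l ω i
    rw [← hK2 l ω i]
    exact ΨK_lb hM (fun ω j => hPz0 l ω j) l ω i
  · intro l ω i
    rw [← hK2 l ω i]
    exact ΨK_ub hM (fun ω j => hPz1 l ω j) l ω i
  · intro l ω i; exact ⟨hPz0 l ω i, hPz1 l ω i⟩

end Dir1


open SM in
/-- Lemma B.2: every mark-to-market clearing solution is dominated by some
historical price accounting clearing solution, and every historical price accounting clearing
solution dominates some mark-to-market clearing solution (componentwise order on `𝔻^T`). -/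
theorem mtm_hpa_comparison
    {Ω : Type*} [Fintype Ω] [MeasurableSpace Ω] {n ℓ : ℕ}
    (M : SM Ω n ℓ) (𝓕 : Fin (ℓ+1) → MeasurableSpace Ω) (μ : MeasureTheory.Measure Ω)
    (hM : M.Valid 𝓕 μ) :
    (∀ z ∈ M.clearingSet 𝓕 μ, ∃ zH ∈ M.clearingSetH 𝓕, z ≤ zH) ∧
    (∀ zH ∈ M.clearingSetH 𝓕, ∃ z ∈ M.clearingSet 𝓕 μ, z ≤ zH) := by
  exact ⟨fun z hz => dir1 hM z hz, fun zH hzH => dir2 hM zH hzH⟩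

end Paper
end

section
/- Suppose the recovery rate is zero (β = 0) and the rebalancing strategies are independent of bank performance, i.e. α(t_l) ∈ [0,1]^n is F_{t_l}-measurable and does not depend on the capital or cash-account processes (e.g. α ≡ 0). Then for any clearing solution (K*, V*, P*, τ*) = Ψ(K*, V*, P*, τ*; α) there exists a clearing solution (K^H, V^H, P^H, τ^H) = Ψ^H(K^H, V^H, P^H, τ^H; α) with (K*, V*, P*, τ*) ≤ (K^H, V^H, P^H, τ^H) componentwise. Conversely, for any clearing solution (K^H, V^H, P^H, τ^H) = Ψ^H(K^H, V^H, P^H, τ^H; α) there exists a clearing solution (K*, V*, P*, τ*) = Ψ(K*, V*, P*, τ*; α) with (K*, V*, P*, τ*) ≤ (K^H, V^H, P^H, τ^H) componentwise. -/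
open MeasureTheory

namespace Paper

/-- Data of the multiple-maturity interbank model. -/
structure MM (Ω : Type*) (n ℓ : ℕ) where
  /-- terminal time -/
  T : ℝ
  /-- times `0 = t 0 < t 1 < ... < t ℓ = T` -/
  t : Fin (ℓ+1) → ℝ
  /-- external (risky) asset process -/
  x : Fin (ℓ+1) → Ω → Fin n → ℝ
  /-- interbank nominal liabilities due at each time: `Lb l i j` owed by bank `i` to bank `j` -/
  Lb : Fin (ℓ+1) → Fin n → Fin n → ℝ
  /-- external (societal) nominal liabilities due at each time -/
  L0 : Fin (ℓ+1) → Fin n → ℝ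
  /-- recovery rate -/
  β : ℝ
  /-- risk-free rate -/
  r : ℝ

namespace MM

variable {Ω : Type*} {n ℓ : ℕ}

/-- Standing assumptions of the multiple-maturity model. -/
structure Valid [MeasurableSpace Ω] (M : MM Ω n ℓ)
    (𝓕 : Fin (ℓ+1) → MeasurableSpace Ω) (μ : Measure Ω) : Prop where
  hn : 1 ≤ n
  hTop : (inferInstance : MeasurableSpace Ω) = ⊤
  hprob : IsProbabilityMeasure μ
  hpos : ∀ ω : Ω, 0 < μ {ω}
  hmono : Monotone 𝓕
  h0 : 𝓕 0 = ⊥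
  hlast : 𝓕 (Fin.last ℓ) = (inferInstance : MeasurableSpace Ω)
  ht : StrictMono M.t
  ht0 : M.t 0 = 0
  htT : M.t (Fin.last ℓ) = M.T
  hx : ∀ l i, Measurable[𝓕 l] fun ω => M.x l ω i
  hx0 : ∀ l ω i, 0 < M.x l ω i
  hLb : ∀ l i j, 0 ≤ M.Lb l i j
  hLbd : ∀ l i, M.Lb l i i = 0
  hL0 : ∀ l i, 0 ≤ M.L0 l i
  hLb0 : ∀ i j, M.Lb 0 i j = 0
  hL00 : ∀ i, M.L0 0 i = 0
  hβ0 : 0 ≤ M.β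
  hβ1 : M.β ≤ 1
  hr : 0 ≤ M.r

/-- total nominal obligations of bank `i` due at time `t_k` (interbank plus societal) -/
noncomputable def outflow (M : MM Ω n ℓ) (k : Fin (ℓ+1)) (i : Fin n) : ℝ :=
  (∑ j, M.Lb k i j) + M.L0 k i

open Classical in
/-- the capital component `Ψ_{K,i}(t_l, Ṽ, P̃, τ)` of the multiple-maturity clearing map -/
noncomputable def Kval (M : MM Ω n ℓ)
    (V : Fin (ℓ+1) → Ω → Fin n → ℝ)
    (P : Fin (ℓ+1) → Fin (ℓ+1) → Ω → Fin n → ℝ)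
    (τ : Fin n → Ω → ℝ) (l : Fin (ℓ+1)) (ω : Ω) (i : Fin n) : ℝ :=
  V l ω i + M.β * (∑ j, M.Lb l j i * indR (τ j ω = M.t l))
    + ∑ k ∈ Finset.univ.filter (fun k => l < k),
        Real.exp (-(M.r * (M.t k - M.t l))) *
          ((∑ j, M.Lb k j i * (M.β + (1 - M.β) * P l k ω j) * indR (M.t l ≤ τ j ω))
            - M.outflow k i)

open Classical in
/-- the cash-account component `Ψ_{V,i}` of the clearing map at time `t_{l+1}`, for a given
realized rebalancing process `A`: the previous cash account (plus recovery payments from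
banks that defaulted at `t_l`) grows at the portfolio return determined by `A(t_l)`, and the
net interbank and societal payments due at `t_{l+1}` are settled. -/
noncomputable def Vval (M : MM Ω n ℓ)
    (A : Fin (ℓ+1) → Ω → Fin n → ℝ)
    (V : Fin (ℓ+1) → Ω → Fin n → ℝ)
    (τ : Fin n → Ω → ℝ) (l : Fin ℓ) (ω : Ω) (i : Fin n) : ℝ :=
  (Real.exp (M.r * (M.t l.succ - M.t l.castSucc)) * A l.castSucc ω i
      + (M.x l.succ ω i / M.x l.castSucc ω i) * (1 - A l.castSucc ω i))
    * (V l.castSucc ω i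
        + M.β * ∑ k ∈ Finset.univ.filter (fun k => l.castSucc ≤ k),
            Real.exp (-(M.r * (M.t k - M.t l.castSucc))) *
              (∑ j, M.Lb k j i * indR (τ j ω = M.t l.castSucc)))
    + (∑ j, M.Lb l.succ j i * indR (M.t l.succ < τ j ω))
    - M.outflow l.succ i

/-- the default-time component `Ψ_{τ,i}`: the first time at which the capital or the cash
account of bank `i` is negative, and `T+1` if both stay nonnegative -/
noncomputable def τval (M : MM Ω n ℓ) (K V : Fin (ℓ+1) → Ω → Fin n → ℝ)
    (i : Fin n) (ω : Ω) : ℝ :=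
  sInf (insert (M.T + 1)
    ((fun l => M.t l) '' {l : Fin (ℓ+1) | min (K l ω i) (V l ω i) < 0}))

/-- `(K, V, P, τ)` is a clearing solution (a fixed point of the multiple-maturity clearing
map `Ψ(·; α)` in the domain `𝔻`) for the rebalancing strategy `α`, which may depend on the
current time, capital and cash account. -/
def isClearing [MeasurableSpace Ω] (M : MM Ω n ℓ)
    (𝓕 : Fin (ℓ+1) → MeasurableSpace Ω) (μ : Measure Ω)
    (α : Fin (ℓ+1) → (Ω → Fin n → ℝ) → (Ω → Fin n → ℝ) → Ω → Fin n → ℝ)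
    (K V : Fin (ℓ+1) → Ω → Fin n → ℝ)
    (P : Fin (ℓ+1) → Fin (ℓ+1) → Ω → Fin n → ℝ)
    (τ : Fin n → Ω → ℝ) : Prop :=
  (∀ l i, Measurable[𝓕 l] fun ω => K l ω i) ∧
  (∀ l i, Measurable[𝓕 l] fun ω => V l ω i) ∧
  (∀ l k i, l ≤ k → Measurable[𝓕 l] fun ω => P l k ω i) ∧
  (∀ l k, l ≤ k → ∀ ω i, 0 ≤ P l k ω i ∧ P l k ω i ≤ 1) ∧
  (∀ i ω, (∃ l, τ i ω = M.t l) ∨ τ i ω = M.T + 1) ∧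
  (∀ ω i, V 0 ω i = M.x 0 ω i) ∧
  (∀ (l : Fin ℓ) ω i,
    V l.succ ω i = M.Vval (fun l' => α l' (K l') (V l')) V τ l ω i) ∧
  (∀ l ω i, K l ω i = M.Kval V P τ l ω i) ∧
  (∀ l k, l ≤ k → ∀ ω i,
    P l k ω i = (μ[fun ω' => indR (M.t k < τ i ω') | 𝓕 l]) ω) ∧
  (∀ i ω, τ i ω = M.τval K V i ω)

/-- `(K, V, P, τ)` is a clearing solution under historical price accounting: identical to
`isClearing` except that the survival component is `Ψ^H_{P,i}(t_l, t_k, τ) = 1{τ_i > t_l}`. -/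
def isClearingH [MeasurableSpace Ω] (M : MM Ω n ℓ)
    (𝓕 : Fin (ℓ+1) → MeasurableSpace Ω) (μ : Measure Ω)
    (α : Fin (ℓ+1) → (Ω → Fin n → ℝ) → (Ω → Fin n → ℝ) → Ω → Fin n → ℝ)
    (K V : Fin (ℓ+1) → Ω → Fin n → ℝ)
    (P : Fin (ℓ+1) → Fin (ℓ+1) → Ω → Fin n → ℝ)
    (τ : Fin n → Ω → ℝ) : Prop :=
  (∀ l i, Measurable[𝓕 l] fun ω => K l ω i) ∧
  (∀ l i, Measurable[𝓕 l] fun ω => V l ω i) ∧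
  (∀ l k i, l ≤ k → Measurable[𝓕 l] fun ω => P l k ω i) ∧
  (∀ l k, l ≤ k → ∀ ω i, 0 ≤ P l k ω i ∧ P l k ω i ≤ 1) ∧
  (∀ i ω, (∃ l, τ i ω = M.t l) ∨ τ i ω = M.T + 1) ∧
  (∀ ω i, V 0 ω i = M.x 0 ω i) ∧
  (∀ (l : Fin ℓ) ω i,
    V l.succ ω i = M.Vval (fun l' => α l' (K l') (V l')) V τ l ω i) ∧
  (∀ l ω i, K l ω i = M.Kval V P τ l ω i) ∧
  (∀ l k, l ≤ k → ∀ ω i, P l k ω i = indR (M.t l < τ i ω)) ∧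
  (∀ i ω, τ i ω = M.τval K V i ω)

/-- the state of the joint process `(x(t_l), K(t_l), V(t_l), (P(t_l,t_k))_{k=l}^ℓ, ι(t_l))`
at time `t_l`, where `ι(t_l) = 1{τ ≥ t_l}`; entries of `P(t_l, ·)` with index `k < l` are
not part of the state and are replaced by `0` -/
noncomputable def mstate (M : MM Ω n ℓ)
    (K V : Fin (ℓ+1) → Ω → Fin n → ℝ)
    (P : Fin (ℓ+1) → Fin (ℓ+1) → Ω → Fin n → ℝ)
    (τ : Fin n → Ω → ℝ) (l : Fin (ℓ+1)) (ω : Ω) :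
    (Fin n → ℝ) × (Fin n → ℝ) × (Fin n → ℝ) × (Fin (ℓ+1) → Fin n → ℝ) × (Fin n → Bool) :=
  (M.x l ω, K l ω, V l ω,
   fun k i => if l ≤ k then P l k ω i else 0,
   fun i => indB (M.t l ≤ τ i ω))

/-! ### Auxiliary lemmas -/

section IndR

lemma indR_nonneg (p : Prop) : 0 ≤ indR p := by
  unfold indR; split <;> norm_num

lemma indR_le_one (p : Prop) : indR p ≤ 1 := by
  unfold indR; split <;> norm_num

lemma indR_mono {p q : Prop} (h : p → q) : indR p ≤ indR q := by
  classical
  by_cases hq : q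
  · calc indR p ≤ 1 := indR_le_one p
      _ = indR q := by simp [indR, hq]
  · have hp : ¬ p := fun hp => hq (h hp)
    simp [indR, hp, hq]

lemma measurable_indR {Ω : Type*} {m : MeasurableSpace Ω} {p : Ω → Prop}
    (hp : MeasurableSet[m] {ω | p ω}) : Measurable[m] fun ω => indR (p ω) := by
  classical
  have h : (fun ω => indR (p ω)) = ({ω | p ω} : Set Ω).indicator (fun _ => (1:ℝ)) := by
    funext ω; by_cases h : p ω <;> simp [indR, h]
  rw [h]
  exact measurable_const.indicator hp

end IndR

section FP

/-- a monotone map with finite range has a fixed point above any post-fixed point -/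
lemma exists_fp_ge {β : Type*} [PartialOrder β] (F : β → β) (hF : Monotone F)
    (S : Set β) (hS : S.Finite) (hrange : ∀ y, F y ∈ S) (x : β) (hx : x ≤ F x) :
    ∃ m : ℕ, F (F^[m] x) = F^[m] x ∧ x ≤ F^[m] x := by
  have hstep : ∀ m : ℕ, F^[m] x ≤ F^[m+1] x := by
    intro m
    induction m with
    | zero => simpa using hx
    | succ k ih =>
      have h := hF ih
      rw [← Function.iterate_succ_apply' F k, ← Function.iterate_succ_apply' F (k+1)] at h
      exact h
  have hmon : Monotone fun m : ℕ => F^[m] x := monotone_nat_of_le_succ hstep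
  haveI : Finite S := hS.to_subtype
  have key : ∀ a b : ℕ, a < b → F^[a+1] x = F^[b+1] x →
      ∃ m : ℕ, F (F^[m] x) = F^[m] x ∧ x ≤ F^[m] x := by
    intro a b hab heq
    refine ⟨a+1, ?_, ?_⟩
    · have h1 : F^[a+1] x ≤ F^[a+2] x := hstep (a+1)
      have h2 : F^[a+2] x ≤ F^[a+1] x := by
        rw [heq]; exact hmon (by omega)
      have h3 : F^[a+2] x = F^[a+1] x := le_antisymm h2 h1
      rw [← Function.iterate_succ_apply' F (a+1) x]
      exact h3
    · exact hmon (Nat.zero_le (a+1))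
  obtain ⟨a, b, hab, heq⟩ := Finite.exists_ne_map_eq_of_infinite
    (fun m : ℕ => (⟨F^[m+1] x, by
      rw [Function.iterate_succ_apply']; exact hrange _⟩ : S))
  have heq' : F^[a+1] x = F^[b+1] x := congrArg Subtype.val heq
  rcases lt_or_gt_of_ne hab with h | h
  · exact key a b h heq'
  · exact key b a h heq'.symm

/-- a monotone map with finite range has a fixed point below any pre-fixed point -/
lemma exists_fp_le {β : Type*} [PartialOrder β] (F : β → β) (hF : Monotone F)
    (S : Set β) (hS : S.Finite) (hrange : ∀ y, F y ∈ S) (x : β) (hx : F x ≤ x) :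
    ∃ m : ℕ, F (F^[m] x) = F^[m] x ∧ F^[m] x ≤ x := by
  have hstep : ∀ m : ℕ, F^[m+1] x ≤ F^[m] x := by
    intro m
    induction m with
    | zero => simpa using hx
    | succ k ih =>
      have h := hF ih
      rw [← Function.iterate_succ_apply' F k, ← Function.iterate_succ_apply' F (k+1)] at h
      exact h
  have hmon : Antitone fun m : ℕ => F^[m] x := antitone_nat_of_succ_le hstep
  haveI : Finite S := hS.to_subtype
  have key : ∀ a b : ℕ, a < b → F^[a+1] x = F^[b+1] x →
      ∃ m : ℕ, F (F^[m] x) = F^[m] x ∧ F^[m] x ≤ x := by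
    intro a b hab heq
    refine ⟨a+1, ?_, ?_⟩
    · have h1 : F^[a+2] x ≤ F^[a+1] x := hstep (a+1)
      have h2 : F^[a+1] x ≤ F^[a+2] x := by
        rw [heq]; exact hmon (by omega)
      have h3 : F^[a+2] x = F^[a+1] x := le_antisymm h1 h2
      rw [← Function.iterate_succ_apply' F (a+1) x]
      exact h3
    · exact hmon (Nat.zero_le (a+1))
  obtain ⟨a, b, hab, heq⟩ := Finite.exists_ne_map_eq_of_infinite
    (fun m : ℕ => (⟨F^[m+1] x, by
      rw [Function.iterate_succ_apply']; exact hrange _⟩ : S))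
  have heq' : F^[a+1] x = F^[b+1] x := congrArg Subtype.val heq
  rcases lt_or_gt_of_ne hab with h | h
  · exact key a b h heq'
  · exact key b a h heq'.symm

lemma funs_finite {ι κ : Type*} [Finite ι] [Finite κ] {s : Set ℝ} (hs : s.Finite) :
    {f : ι → κ → ℝ | ∀ i k, f i k ∈ s}.Finite := by
  have h1 : {g : κ → ℝ | ∀ k, g k ∈ s}.Finite := by
    have h := Set.Finite.pi (fun _ : κ => hs)
    have he : (Set.pi Set.univ fun _ : κ => s) = {g : κ → ℝ | ∀ k, g k ∈ s} := by
      ext g; simp [Set.mem_pi]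
    rwa [he] at h
  have h := Set.Finite.pi (fun _ : ι => h1)
  have he : (Set.pi Set.univ fun _ : ι => {g : κ → ℝ | ∀ k, g k ∈ s})
      = {f : ι → κ → ℝ | ∀ i k, f i k ∈ s} := by
    ext f; simp [Set.mem_pi, Set.mem_setOf_eq]
  rwa [he] at h

end FP

section Tau

variable {M : MM Ω n ℓ}

lemma τval_set_finite (K V : Fin (ℓ+1) → Ω → Fin n → ℝ) (i : Fin n) (ω : Ω) :
    (insert (M.T + 1)
      ((fun l => M.t l) '' {l : Fin (ℓ+1) | min (K l ω i) (V l ω i) < 0})).Finite :=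
  Set.Finite.insert _ ((Set.toFinite _).image _)

lemma τval_mem (K V : Fin (ℓ+1) → Ω → Fin n → ℝ) (i : Fin n) (ω : Ω) :
    M.τval K V i ω ∈ insert (M.T + 1)
      ((fun l => M.t l) '' {l : Fin (ℓ+1) | min (K l ω i) (V l ω i) < 0}) := by
  unfold τval
  exact (Set.insert_nonempty _ _).csInf_mem (τval_set_finite K V i ω)

lemma τval_grid (K V : Fin (ℓ+1) → Ω → Fin n → ℝ) (i : Fin n) (ω : Ω) :
    (∃ l, M.τval K V i ω = M.t l) ∨ M.τval K V i ω = M.T + 1 := by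
  rcases Set.mem_insert_iff.mp (τval_mem K V i ω) with h | h
  · exact Or.inr h
  · obtain ⟨m, _, hm⟩ := h
    exact Or.inl ⟨m, hm.symm⟩

lemma τval_mem' (K V : Fin (ℓ+1) → Ω → Fin n → ℝ) (i : Fin n) (ω : Ω) :
    M.τval K V i ω ∈ insert (M.T + 1) (Set.range M.t) := by
  rcases τval_grid K V i ω with ⟨l, h⟩ | h
  · exact Set.mem_insert_iff.2 (Or.inr ⟨l, h.symm⟩)
  · rw [h]; exact Set.mem_insert _ _

lemma lt_τval_iff (ht : StrictMono M.t) (htT : M.t (Fin.last ℓ) = M.T)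
    {K V : Fin (ℓ+1) → Ω → Fin n → ℝ} {i : Fin n} {ω : Ω} {l : Fin (ℓ+1)} :
    M.t l < M.τval K V i ω ↔ ∀ m, m ≤ l → 0 ≤ min (K m ω i) (V m ω i) := by
  constructor
  · intro h m hm
    by_contra hneg
    push_neg at hneg
    have hmem : M.t m ∈ insert (M.T+1)
        ((fun l => M.t l) '' {l : Fin (ℓ+1) | min (K l ω i) (V l ω i) < 0}) :=
      Set.mem_insert_iff.2 (Or.inr ⟨m, hneg, rfl⟩)
    have h1 : M.τval K V i ω ≤ M.t m := csInf_le (τval_set_finite K V i ω).bddBelow hmem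
    have h2 : M.t m ≤ M.t l := ht.monotone hm
    linarith
  · intro h
    rcases Set.mem_insert_iff.mp (τval_mem K V i ω) with heq | ⟨m, hmD, hmeq⟩
    · rw [heq]
      have h1 : M.t l ≤ M.T := htT ▸ ht.monotone (Fin.le_last l)
      linarith
    · rw [← hmeq]
      apply ht
      by_contra hml
      push_neg at hml
      exact absurd (h m hml) (not_le.2 hmD)

lemma le_τval_iff (ht : StrictMono M.t) (htT : M.t (Fin.last ℓ) = M.T)
    {K V : Fin (ℓ+1) → Ω → Fin n → ℝ} {i : Fin n} {ω : Ω} {l : Fin (ℓ+1)} :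
    M.t l ≤ M.τval K V i ω ↔ ∀ m, m < l → 0 ≤ min (K m ω i) (V m ω i) := by
  constructor
  · intro h m hm
    by_contra hneg
    push_neg at hneg
    have hmem : M.t m ∈ insert (M.T+1)
        ((fun l => M.t l) '' {l : Fin (ℓ+1) | min (K l ω i) (V l ω i) < 0}) :=
      Set.mem_insert_iff.2 (Or.inr ⟨m, hneg, rfl⟩)
    have h1 : M.τval K V i ω ≤ M.t m := csInf_le (τval_set_finite K V i ω).bddBelow hmem
    have h2 : M.t m < M.t l := ht hm
    linarith
  · intro h
    rcases Set.mem_insert_iff.mp (τval_mem K V i ω) with heq | ⟨m, hmD, hmeq⟩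
    · rw [heq]
      have h1 : M.t l ≤ M.T := htT ▸ ht.monotone (Fin.le_last l)
      linarith
    · rw [← hmeq]
      apply ht.monotone
      by_contra hml
      push_neg at hml
      exact absurd (h m hml) (not_le.2 hmD)

lemma τval_mono {K K' V V' : Fin (ℓ+1) → Ω → Fin n → ℝ}
    (hK : ∀ l ω i, K l ω i ≤ K' l ω i) (hV : ∀ l ω i, V l ω i ≤ V' l ω i)
    (i : Fin n) (ω : Ω) : M.τval K V i ω ≤ M.τval K' V' i ω := by
  unfold τval
  apply csInf_le_csInf (τval_set_finite K V i ω).bddBelow (Set.insert_nonempty _ _)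
  intro a ha
  rcases Set.mem_insert_iff.mp ha with h | ⟨m, hm, hmeq⟩
  · exact Set.mem_insert_iff.2 (Or.inl h)
  · refine Set.mem_insert_iff.2 (Or.inr ⟨m, ?_, hmeq⟩)
    exact lt_of_le_of_lt (min_le_min (hK m ω i) (hV m ω i)) hm

end Tau

section KV

variable {M : MM Ω n ℓ}

lemma Kval_eq (hβ : M.β = 0) (V : Fin (ℓ+1) → Ω → Fin n → ℝ)
    (P : Fin (ℓ+1) → Fin (ℓ+1) → Ω → Fin n → ℝ) (τ : Fin n → Ω → ℝ)
    (l : Fin (ℓ+1)) (ω : Ω) (i : Fin n) :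
    M.Kval V P τ l ω i = V l ω i
      + ∑ k ∈ Finset.univ.filter (fun k => l < k),
          Real.exp (-(M.r * (M.t k - M.t l))) *
            ((∑ j, M.Lb k j i * P l k ω j * indR (M.t l ≤ τ j ω)) - M.outflow k i) := by
  simp only [Kval, hβ, zero_mul, add_zero, zero_add, sub_zero, one_mul]

lemma Vval_eq (hβ : M.β = 0) (A V : Fin (ℓ+1) → Ω → Fin n → ℝ) (τ : Fin n → Ω → ℝ)
    (l : Fin ℓ) (ω : Ω) (i : Fin n) :
    M.Vval A V τ l ω i =
      (Real.exp (M.r * (M.t l.succ - M.t l.castSucc)) * A l.castSucc ω i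
        + (M.x l.succ ω i / M.x l.castSucc ω i) * (1 - A l.castSucc ω i))
      * V l.castSucc ω i
      + (∑ j, M.Lb l.succ j i * indR (M.t l.succ < τ j ω))
      - M.outflow l.succ i := by
  simp only [Vval, hβ, zero_mul, add_zero]

lemma Vval_congr {A V V' : Fin (ℓ+1) → Ω → Fin n → ℝ} {τ : Fin n → Ω → ℝ}
    {l : Fin ℓ} {ω : Ω} {i : Fin n}
    (h : V l.castSucc ω i = V' l.castSucc ω i) :
    M.Vval A V τ l ω i = M.Vval A V' τ l ω i := by
  unfold Vval; rw [h]

lemma Kval_mono (hβ : M.β = 0) (hLb : ∀ l i j, 0 ≤ M.Lb l i j)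
    {V V' : Fin (ℓ+1) → Ω → Fin n → ℝ}
    {P P' : Fin (ℓ+1) → Fin (ℓ+1) → Ω → Fin n → ℝ} {τ τ' : Fin n → Ω → ℝ}
    (hV : ∀ l ω i, V l ω i ≤ V' l ω i)
    (hP : ∀ (l k : Fin (ℓ+1)), l < k → ∀ ω j, P l k ω j ≤ P' l k ω j)
    (hP0 : ∀ (l k : Fin (ℓ+1)), l < k → ∀ ω j, 0 ≤ P' l k ω j)
    (hτ : ∀ j ω, τ j ω ≤ τ' j ω) :
    ∀ l ω i, M.Kval V P τ l ω i ≤ M.Kval V' P' τ' l ω i := by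
  intro l ω i
  rw [Kval_eq hβ, Kval_eq hβ]
  refine add_le_add (hV l ω i) (Finset.sum_le_sum ?_)
  intro k hk
  have hlk : l < k := (Finset.mem_filter.mp hk).2
  refine mul_le_mul_of_nonneg_left (sub_le_sub_right (Finset.sum_le_sum ?_) _)
    (Real.exp_pos _).le
  intro j _
  calc M.Lb k j i * P l k ω j * indR (M.t l ≤ τ j ω)
      ≤ M.Lb k j i * P' l k ω j * indR (M.t l ≤ τ j ω) :=
        mul_le_mul_of_nonneg_right
          (mul_le_mul_of_nonneg_left (hP l k hlk ω j) (hLb _ _ _)) (indR_nonneg _)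
    _ ≤ M.Lb k j i * P' l k ω j * indR (M.t l ≤ τ' j ω) :=
        mul_le_mul_of_nonneg_left (indR_mono fun h => le_trans h (hτ j ω))
          (mul_nonneg (hLb _ _ _) (hP0 l k hlk ω j))

end KV

section VfSec

/-- the cash-account process determined by the default-time process `τ` and the realized
rebalancing process `A` -/
noncomputable def Vf (M : MM Ω n ℓ) (A : Fin (ℓ+1) → Ω → Fin n → ℝ) (τ : Fin n → Ω → ℝ) :
    Fin (ℓ+1) → Ω → Fin n → ℝ :=
  Fin.induction (M.x 0) (fun l prev => M.Vval A (fun _ => prev) τ l)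

variable {M : MM Ω n ℓ}

lemma Vf_zero (A : Fin (ℓ+1) → Ω → Fin n → ℝ) (τ : Fin n → Ω → ℝ) :
    M.Vf A τ 0 = M.x 0 := rfl

lemma Vf_succ (A : Fin (ℓ+1) → Ω → Fin n → ℝ) (τ : Fin n → Ω → ℝ) (l : Fin ℓ) :
    M.Vf A τ l.succ = M.Vval A (M.Vf A τ) τ l := by
  unfold Vf
  rw [Fin.induction_succ]
  rfl

lemma Vf_unique {A V : Fin (ℓ+1) → Ω → Fin n → ℝ} {τ : Fin n → Ω → ℝ}
    (h0 : ∀ ω i, V 0 ω i = M.x 0 ω i)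
    (hs : ∀ (l : Fin ℓ) ω i, V l.succ ω i = M.Vval A V τ l ω i) :
    ∀ l ω i, V l ω i = M.Vf A τ l ω i := by
  intro l
  induction l using Fin.induction with
  | zero => intro ω i; rw [h0]; rfl
  | succ l ih =>
    intro ω i
    rw [hs, Vf_succ]
    exact Vval_congr (ih ω i)

lemma Vf_mono (hβ : M.β = 0) (hx0 : ∀ l ω i, 0 < M.x l ω i)
    (hLb : ∀ l i j, 0 ≤ M.Lb l i j)
    {A : Fin (ℓ+1) → Ω → Fin n → ℝ} {τ τ' : Fin n → Ω → ℝ}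
    (hA : ∀ l ω i, A l ω i ∈ Set.Icc (0:ℝ) 1)
    (hτ : ∀ j ω, τ j ω ≤ τ' j ω) :
    ∀ l ω i, M.Vf A τ l ω i ≤ M.Vf A τ' l ω i := by
  intro l
  induction l using Fin.induction with
  | zero => intro ω i; exact le_rfl
  | succ l ih =>
    intro ω i
    rw [Vf_succ, Vf_succ, Vval_eq hβ, Vval_eq hβ]
    have hcoef : 0 ≤ Real.exp (M.r * (M.t l.succ - M.t l.castSucc)) * A l.castSucc ω i
        + (M.x l.succ ω i / M.x l.castSucc ω i) * (1 - A l.castSucc ω i) := by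
      have h1 := (hA l.castSucc ω i).1
      have h2 := (hA l.castSucc ω i).2
      have h3 := (Real.exp_pos (M.r * (M.t l.succ - M.t l.castSucc))).le
      have h4 := (div_pos (hx0 l.succ ω i) (hx0 l.castSucc ω i)).le
      have h5 : (0:ℝ) ≤ 1 - A l.castSucc ω i := by linarith
      positivity
    have hsum : (∑ j, M.Lb l.succ j i * indR (M.t l.succ < τ j ω))
        ≤ ∑ j, M.Lb l.succ j i * indR (M.t l.succ < τ' j ω) :=
      Finset.sum_le_sum fun j _ => mul_le_mul_of_nonneg_left
        (indR_mono fun h => lt_of_lt_of_le h (hτ j ω)) (hLb _ _ _)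
    have hV := mul_le_mul_of_nonneg_left (ih ω i) hcoef
    linarith

end VfSec

section TGoodSec

variable [MeasurableSpace Ω] {M : MM Ω n ℓ} {𝓕 : Fin (ℓ+1) → MeasurableSpace Ω}

/-- the default-time process `τ` is grid-valued and generates adapted survival events -/
structure TGood [MeasurableSpace Ω] (M : MM Ω n ℓ) (𝓕 : Fin (ℓ+1) → MeasurableSpace Ω)
    (τ : Fin n → Ω → ℝ) : Prop where
  grid : ∀ i ω, (∃ l, τ i ω = M.t l) ∨ τ i ω = M.T + 1
  measLt : ∀ l i, MeasurableSet[𝓕 l] {ω | M.t l < τ i ω}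
  measLe : ∀ l i, MeasurableSet[𝓕 l] {ω | M.t l ≤ τ i ω}

lemma TGood.congr {τ τ' : Fin n → Ω → ℝ} (h : ∀ i ω, τ i ω = τ' i ω)
    (hT : M.TGood 𝓕 τ') : M.TGood 𝓕 τ where
  grid i ω := h i ω ▸ hT.grid i ω
  measLt l i := by
    have he : {ω | M.t l < τ i ω} = {ω | M.t l < τ' i ω} := by
      ext ω; simp only [Set.mem_setOf_eq, h i ω]
    exact he ▸ hT.measLt l i
  measLe l i := by
    have he : {ω | M.t l ≤ τ i ω} = {ω | M.t l ≤ τ' i ω} := by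
      ext ω; simp only [Set.mem_setOf_eq, h i ω]
    exact he ▸ hT.measLe l i

lemma TGood_τval (hmono : Monotone 𝓕) (ht : StrictMono M.t) (htT : M.t (Fin.last ℓ) = M.T)
    {K V : Fin (ℓ+1) → Ω → Fin n → ℝ}
    (hK : ∀ l i, Measurable[𝓕 l] fun ω => K l ω i)
    (hV : ∀ l i, Measurable[𝓕 l] fun ω => V l ω i) :
    M.TGood 𝓕 (M.τval K V) where
  grid i ω := τval_grid K V i ω
  measLt l i := by
    have hset : {ω | M.t l < M.τval K V i ω}
        = ⋂ m ∈ {m : Fin (ℓ+1) | m ≤ l}, {ω | 0 ≤ min (K m ω i) (V m ω i)} := by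
      ext ω
      simp only [Set.mem_setOf_eq, Set.mem_iInter, lt_τval_iff ht htT]
    rw [hset]
    exact MeasurableSet.biInter (Set.to_countable _) fun m hm =>
      measurableSet_le measurable_const
        (((hK m i).mono (hmono hm) le_rfl).min ((hV m i).mono (hmono hm) le_rfl))
  measLe l i := by
    have hset : {ω | M.t l ≤ M.τval K V i ω}
        = ⋂ m ∈ {m : Fin (ℓ+1) | m < l}, {ω | 0 ≤ min (K m ω i) (V m ω i)} := by
      ext ω
      simp only [Set.mem_setOf_eq, Set.mem_iInter, le_τval_iff ht htT]
    rw [hset]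
    exact MeasurableSet.biInter (Set.to_countable _) fun m hm =>
      measurableSet_le measurable_const
        (((hK m i).mono (hmono hm.le) le_rfl).min ((hV m i).mono (hmono hm.le) le_rfl))

lemma Vf_adapted (hβ : M.β = 0) (hmono : Monotone 𝓕)
    (hx : ∀ l i, Measurable[𝓕 l] fun ω => M.x l ω i)
    {A : Fin (ℓ+1) → Ω → Fin n → ℝ} {τ : Fin n → Ω → ℝ}
    (hA : ∀ l i, Measurable[𝓕 l] fun ω => A l ω i)
    (hT : M.TGood 𝓕 τ) :
    ∀ l i, Measurable[𝓕 l] fun ω => M.Vf A τ l ω i := by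
  intro l
  induction l using Fin.induction with
  | zero => intro i; exact hx 0 i
  | succ l ih =>
    intro i
    have heq : (fun ω => M.Vf A τ l.succ ω i) = fun ω =>
        (Real.exp (M.r * (M.t l.succ - M.t l.castSucc)) * A l.castSucc ω i
          + (M.x l.succ ω i / M.x l.castSucc ω i) * (1 - A l.castSucc ω i))
        * M.Vf A τ l.castSucc ω i
        + (∑ j, M.Lb l.succ j i * indR (M.t l.succ < τ j ω)) - M.outflow l.succ i := by
      funext ω; rw [Vf_succ, Vval_eq hβ]
    rw [heq]
    have hcs : 𝓕 l.castSucc ≤ 𝓕 l.succ := hmono (Fin.castSucc_lt_succ : l.castSucc < l.succ).le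
    have hA' : Measurable[𝓕 l.succ] fun ω => A l.castSucc ω i := (hA _ i).mono hcs le_rfl
    have hx1 : Measurable[𝓕 l.succ] fun ω => M.x l.succ ω i := hx _ i
    have hx2 : Measurable[𝓕 l.succ] fun ω => M.x l.castSucc ω i := (hx _ i).mono hcs le_rfl
    have hVp : Measurable[𝓕 l.succ] fun ω => M.Vf A τ l.castSucc ω i :=
      (ih i).mono hcs le_rfl
    have hsum : Measurable[𝓕 l.succ] fun ω =>
        ∑ j, M.Lb l.succ j i * indR (M.t l.succ < τ j ω) :=
      Finset.measurable_sum _ fun j _ =>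
        (measurable_indR (hT.measLt l.succ j)).const_mul _
    exact ((((measurable_const.mul hA').add
      ((hx1.div hx2).mul (measurable_const.sub hA'))).mul hVp).add hsum).sub measurable_const

lemma Kval_adapted (hβ : M.β = 0)
    {V : Fin (ℓ+1) → Ω → Fin n → ℝ} {P : Fin (ℓ+1) → Fin (ℓ+1) → Ω → Fin n → ℝ}
    {τ : Fin n → Ω → ℝ}
    (hV : ∀ l i, Measurable[𝓕 l] fun ω => V l ω i)
    (hP : ∀ (l k : Fin (ℓ+1)) i, l < k → Measurable[𝓕 l] fun ω => P l k ω i)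
    (hT : M.TGood 𝓕 τ) :
    ∀ l i, Measurable[𝓕 l] fun ω => M.Kval V P τ l ω i := by
  intro l i
  have heq : (fun ω => M.Kval V P τ l ω i) = fun ω => V l ω i
      + ∑ k ∈ Finset.univ.filter (fun k => l < k),
          Real.exp (-(M.r * (M.t k - M.t l))) *
            ((∑ j, M.Lb k j i * P l k ω j * indR (M.t l ≤ τ j ω)) - M.outflow k i) := by
    funext ω; rw [Kval_eq hβ]
  rw [heq]
  refine (hV l i).add (Finset.measurable_sum _ fun k hk => ?_)
  have hlk : l < k := (Finset.mem_filter.mp hk).2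
  refine Measurable.const_mul (Measurable.sub ?_ measurable_const) _
  exact Finset.measurable_sum _ fun j _ =>
    ((hP l k j hlk).const_mul _).mul (measurable_indR (hT.measLe l j))

end TGoodSec

section CondSec

variable {Ω : Type*} [Fintype Ω] {mΩ : MeasurableSpace Ω} {μ : Measure Ω}

lemma measSet_all (hTop : mΩ = ⊤) (s : Set Ω) :
    MeasurableSet s := by
  rw [hTop]; exact MeasurableSpace.measurableSet_top

lemma integrable_all (hTop : mΩ = ⊤)
    [IsFiniteMeasure μ] (f : Ω → ℝ) : Integrable f μ := by
  haveI : MeasurableSingletonClass Ω := ⟨fun a => measSet_all hTop _⟩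
  exact Integrable.of_finite

lemma pt_of_ae (hpos : ∀ ω : Ω, 0 < μ {ω}) {p : Ω → Prop} (h : ∀ᵐ ω ∂μ, p ω) :
    ∀ ω, p ω := by
  intro ω
  by_contra hc
  have h0 : μ {a | ¬ p a} = 0 := ae_iff.mp h
  have h1 : μ {ω} ≤ μ {a | ¬ p a} :=
    measure_mono (fun x hx => by rw [Set.mem_singleton_iff] at hx; exact hx ▸ hc)
  rw [h0] at h1
  exact absurd (lt_of_lt_of_le (hpos ω) h1) (lt_irrefl 0)

lemma cond_le {m : MeasurableSpace Ω} (hTop : mΩ = ⊤)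
    (hpos : ∀ ω : Ω, 0 < μ {ω}) [IsProbabilityMeasure μ]
    {f g : Ω → ℝ} (hfg : ∀ ω, f ω ≤ g ω) : ∀ ω, (μ[f|m]) ω ≤ (μ[g|m]) ω :=
  pt_of_ae hpos (condExp_mono (integrable_all hTop f) (integrable_all hTop g)
    (Filter.Eventually.of_forall hfg))

lemma cond_nonneg {m : MeasurableSpace Ω} (hTop : mΩ = ⊤)
    (hpos : ∀ ω : Ω, 0 < μ {ω}) [IsProbabilityMeasure μ]
    {f : Ω → ℝ} (hf : ∀ ω, 0 ≤ f ω) : ∀ ω, 0 ≤ (μ[f|m]) ω := by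
  have h := pt_of_ae hpos (condExp_nonneg (μ := μ) (m := m) (f := f)
    (Filter.Eventually.of_forall hf))
  intro ω
  simpa using h ω

lemma cond_self {m : MeasurableSpace Ω} (hTop : mΩ = ⊤)
    [IsProbabilityMeasure μ] (hm : m ≤ mΩ)
    {f : Ω → ℝ} (hf : Measurable[m] f) : μ[f|m] = f :=
  condExp_of_stronglyMeasurable hm hf.stronglyMeasurable (integrable_all hTop f)

lemma cond_le_one {m : MeasurableSpace Ω} (hTop : mΩ = ⊤)
    (hpos : ∀ ω : Ω, 0 < μ {ω}) [IsProbabilityMeasure μ]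
    (hm : m ≤ mΩ)
    {f : Ω → ℝ} (hf : ∀ ω, f ω ≤ 1) : ∀ ω, (μ[f|m]) ω ≤ 1 := by
  intro ω
  have h := cond_le (m := m) hTop hpos (g := fun _ => (1:ℝ)) hf ω
  rwa [condExp_const hm] at h

end CondSec

section PcfSec

/-- the mark-to-market survival probability process determined by `τ` -/
noncomputable def Pcf [MeasurableSpace Ω] (M : MM Ω n ℓ)
    (𝓕 : Fin (ℓ+1) → MeasurableSpace Ω) (μ : Measure Ω) (τ : Fin n → Ω → ℝ)
    (l k : Fin (ℓ+1)) (ω : Ω) (i : Fin n) : ℝ :=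
  (μ[fun ω' => indR (M.t k < τ i ω') | 𝓕 l]) ω

variable [Fintype Ω] {mΩ : MeasurableSpace Ω} {μ : Measure Ω} {M : MM Ω n ℓ}
  {𝓕 : Fin (ℓ+1) → MeasurableSpace Ω}

lemma Pcf_nonneg (hTop : mΩ = ⊤)
    (hpos : ∀ ω : Ω, 0 < μ {ω}) [IsProbabilityMeasure μ]
    (τ : Fin n → Ω → ℝ) (l k : Fin (ℓ+1)) (ω : Ω) (i : Fin n) :
    0 ≤ M.Pcf 𝓕 μ τ l k ω i :=
  cond_nonneg hTop hpos (fun _ => indR_nonneg _) ω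

lemma Pcf_le_one (hTop : mΩ = ⊤)
    (hpos : ∀ ω : Ω, 0 < μ {ω}) [IsProbabilityMeasure μ] {l : Fin (ℓ+1)}
    (hm : 𝓕 l ≤ mΩ)
    (τ : Fin n → Ω → ℝ) (k : Fin (ℓ+1)) (ω : Ω) (i : Fin n) :
    M.Pcf 𝓕 μ τ l k ω i ≤ 1 :=
  cond_le_one hTop hpos hm (fun _ => indR_le_one _) ω

lemma Pcf_mono (hTop : mΩ = ⊤)
    (hpos : ∀ ω : Ω, 0 < μ {ω}) [IsProbabilityMeasure μ]
    {τ τ' : Fin n → Ω → ℝ} (hτ : ∀ j ω, τ j ω ≤ τ' j ω)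
    (l k : Fin (ℓ+1)) (ω : Ω) (i : Fin n) :
    M.Pcf 𝓕 μ τ l k ω i ≤ M.Pcf 𝓕 μ τ' l k ω i :=
  cond_le hTop hpos (fun ω' => indR_mono fun h => lt_of_lt_of_le h (hτ i ω')) ω

lemma Pcf_le_ind (hTop : mΩ = ⊤)
    (hpos : ∀ ω : Ω, 0 < μ {ω}) [IsProbabilityMeasure μ]
    (ht : StrictMono M.t) {l k : Fin (ℓ+1)}
    (hm : 𝓕 l ≤ mΩ)
    {τ : Fin n → Ω → ℝ} (hT : M.TGood 𝓕 τ) (hlk : l ≤ k) (ω : Ω) (i : Fin n) :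
    M.Pcf 𝓕 μ τ l k ω i ≤ indR (M.t l < τ i ω) := by
  have h2 := cond_le (m := 𝓕 l) hTop hpos (f := fun ω' => indR (M.t k < τ i ω'))
      (g := fun ω' => indR (M.t l < τ i ω'))
      (fun ω' => indR_mono fun h => lt_of_le_of_lt (ht.monotone hlk) h) ω
  rwa [cond_self hTop hm (measurable_indR (hT.measLt l i))] at h2

lemma Pcf_adapted (l k : Fin (ℓ+1)) (τ : Fin n → Ω → ℝ) (i : Fin n) :
    Measurable[𝓕 l] fun ω => M.Pcf 𝓕 μ τ l k ω i :=
  stronglyMeasurable_condExp.measurable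

end PcfSec

section MapDefs

/-- historical price accounting survival indicators determined by `τ` -/
noncomputable def PHfun (M : MM Ω n ℓ) (τ : Fin n → Ω → ℝ) :
    Fin (ℓ+1) → Fin (ℓ+1) → Ω → Fin n → ℝ :=
  fun l _ ω i => indR (M.t l < τ i ω)

/-- one step of the historical price accounting default-time iteration -/
noncomputable def FmapH (M : MM Ω n ℓ) (A : Fin (ℓ+1) → Ω → Fin n → ℝ)
    (σ : Fin n → Ω → ℝ) : Fin n → Ω → ℝ :=
  M.τval (fun l => M.Kval (M.Vf A σ) (M.PHfun σ) σ l) (M.Vf A σ)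

/-- one step of the mark-to-market default-time iteration -/
noncomputable def FmapC [MeasurableSpace Ω] (M : MM Ω n ℓ)
    (𝓕 : Fin (ℓ+1) → MeasurableSpace Ω) (μ : Measure Ω)
    (A : Fin (ℓ+1) → Ω → Fin n → ℝ) (σ : Fin n → Ω → ℝ) : Fin n → Ω → ℝ :=
  M.τval (fun l => M.Kval (M.Vf A σ) (M.Pcf 𝓕 μ σ) σ l) (M.Vf A σ)

variable {M : MM Ω n ℓ}

lemma FmapH_mono (hβ : M.β = 0) (hx0 : ∀ l ω i, 0 < M.x l ω i)
    (hLb : ∀ l i j, 0 ≤ M.Lb l i j) {A : Fin (ℓ+1) → Ω → Fin n → ℝ}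
    (hA : ∀ l ω i, A l ω i ∈ Set.Icc (0:ℝ) 1) : Monotone (M.FmapH A) := by
  intro σ σ' hσ
  have hσ' : ∀ j ω, σ j ω ≤ σ' j ω := fun j ω => hσ j ω
  have hVm := Vf_mono hβ hx0 hLb hA hσ'
  rw [Pi.le_def]; intro i; rw [Pi.le_def]; intro ω
  exact τval_mono
    (Kval_mono hβ hLb hVm
      (fun l k _ ω' j => indR_mono fun h => lt_of_lt_of_le h (hσ' j ω'))
      (fun _ _ _ _ _ => indR_nonneg _) hσ') hVm i ω

lemma FmapC_mono [Fintype Ω] {mΩ : MeasurableSpace Ω} {𝓕 : Fin (ℓ+1) → MeasurableSpace Ω}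
    {μ : Measure Ω} (hTop : mΩ = ⊤) (hpos : ∀ ω : Ω, 0 < μ {ω}) [IsProbabilityMeasure μ]
    (hβ : M.β = 0) (hx0 : ∀ l ω i, 0 < M.x l ω i)
    (hLb : ∀ l i j, 0 ≤ M.Lb l i j) {A : Fin (ℓ+1) → Ω → Fin n → ℝ}
    (hA : ∀ l ω i, A l ω i ∈ Set.Icc (0:ℝ) 1) : Monotone (M.FmapC 𝓕 μ A) := by
  intro σ σ' hσ
  have hσ' : ∀ j ω, σ j ω ≤ σ' j ω := fun j ω => hσ j ω
  have hVm := Vf_mono hβ hx0 hLb hA hσ'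
  rw [Pi.le_def]; intro i; rw [Pi.le_def]; intro ω
  exact τval_mono
    (Kval_mono hβ hLb hVm
      (fun l k _ ω' j => Pcf_mono hTop hpos hσ' l k ω' j)
      (fun l k _ ω' j => Pcf_nonneg hTop hpos σ' l k ω' j) hσ') hVm i ω

lemma FmapH_TGood [MeasurableSpace Ω] {𝓕 : Fin (ℓ+1) → MeasurableSpace Ω}
    (hβ : M.β = 0) (hmono : Monotone 𝓕)
    (hx : ∀ l i, Measurable[𝓕 l] fun ω => M.x l ω i)
    (ht : StrictMono M.t) (htT : M.t (Fin.last ℓ) = M.T)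
    {A : Fin (ℓ+1) → Ω → Fin n → ℝ} (hA : ∀ l i, Measurable[𝓕 l] fun ω => A l ω i)
    {σ : Fin n → Ω → ℝ} (hσ : M.TGood 𝓕 σ) : M.TGood 𝓕 (M.FmapH A σ) := by
  have hVad := Vf_adapted hβ hmono hx hA hσ
  exact TGood_τval hmono ht htT
    (Kval_adapted hβ hVad (fun l k i _ => measurable_indR (hσ.measLt l i)) hσ) hVad

lemma FmapC_TGood [Fintype Ω] {mΩ : MeasurableSpace Ω} {𝓕 : Fin (ℓ+1) → MeasurableSpace Ω}
    {μ : Measure Ω} (hβ : M.β = 0) (hmono : Monotone 𝓕)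
    (hx : ∀ l i, Measurable[𝓕 l] fun ω => M.x l ω i)
    (ht : StrictMono M.t) (htT : M.t (Fin.last ℓ) = M.T)
    {A : Fin (ℓ+1) → Ω → Fin n → ℝ} (hA : ∀ l i, Measurable[𝓕 l] fun ω => A l ω i)
    {σ : Fin n → Ω → ℝ} (hσ : M.TGood 𝓕 σ) : M.TGood 𝓕 (M.FmapC 𝓕 μ A σ) := by
  have hVad := Vf_adapted hβ hmono hx hA hσ
  exact TGood_τval hmono ht htT
    (Kval_adapted hβ hVad (fun l k i _ => Pcf_adapted l k σ i) hσ) hVad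

lemma iter_TGood [MeasurableSpace Ω] {𝓕 : Fin (ℓ+1) → MeasurableSpace Ω}
    {F : (Fin n → Ω → ℝ) → (Fin n → Ω → ℝ)}
    (hF : ∀ ρ, M.TGood 𝓕 ρ → M.TGood 𝓕 (F ρ)) {τ : Fin n → Ω → ℝ}
    (hτ : M.TGood 𝓕 τ) : ∀ m, M.TGood 𝓕 (F^[m] τ) := by
  intro m
  induction m with
  | zero => exact hτ
  | succ k ih =>
    rw [Function.iterate_succ_apply']
    exact hF _ ih

end MapDefs

end MM

open MM in
/-- Lemma B.4: comparison of mark-to-market and historical price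
accounting in the multiple-maturity model with zero recovery (`β = 0`) and rebalancing
strategies independent of bank performance.  Every mark-to-market clearing solution is
dominated componentwise by some historical price accounting clearing solution (the
`P`-components being compared for maturities `k ≥ l`), and conversely every historical price
accounting clearing solution dominates some mark-to-market clearing solution. -/
theorem multi_maturity_mtm_hpa_comparison
    {Ω : Type*} [Fintype Ω] [MeasurableSpace Ω] {n ℓ : ℕ}
    (M : MM Ω n ℓ) (𝓕 : Fin (ℓ+1) → MeasurableSpace Ω) (μ : MeasureTheory.Measure Ω)
    (hM : M.Valid 𝓕 μ)
    (hβ : M.β = 0)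
    (α : Fin (ℓ+1) → (Ω → Fin n → ℝ) → (Ω → Fin n → ℝ) → Ω → Fin n → ℝ)
    (hα_range : ∀ l Kh Vh ω i, α l Kh Vh ω i ∈ Set.Icc (0:ℝ) 1)
    (hα_meas : ∀ (l : Fin (ℓ+1)) (Kh Vh : Ω → Fin n → ℝ),
      ∀ i, Measurable[𝓕 l] fun ω => α l Kh Vh ω i)
    (hα_const : ∀ (l : Fin (ℓ+1)) (Kh Kh' Vh Vh' : Ω → Fin n → ℝ),
      α l Kh Vh = α l Kh' Vh') :
    (∀ K V P τ, M.isClearing 𝓕 μ α K V P τ →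
      ∃ KH VH PH τH, M.isClearingH 𝓕 μ α KH VH PH τH ∧
        (∀ l ω i, K l ω i ≤ KH l ω i) ∧
        (∀ l ω i, V l ω i ≤ VH l ω i) ∧
        (∀ l k, l ≤ k → ∀ ω i, P l k ω i ≤ PH l k ω i) ∧
        (∀ i ω, τ i ω ≤ τH i ω)) ∧
    (∀ KH VH PH τH, M.isClearingH 𝓕 μ α KH VH PH τH →
      ∃ K V P τ, M.isClearing 𝓕 μ α K V P τ ∧
        (∀ l ω i, K l ω i ≤ KH l ω i) ∧
        (∀ l ω i, V l ω i ≤ VH l ω i) ∧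
        (∀ l k, l ≤ k → ∀ ω i, P l k ω i ≤ PH l k ω i) ∧
        (∀ i ω, τ i ω ≤ τH i ω)) := by
  classical
  haveI := hM.hprob
  set Z : Ω → Fin n → ℝ := fun _ _ => 0 with hZ
  set A : Fin (ℓ+1) → Ω → Fin n → ℝ := fun l => α l Z Z with hA
  have hAr : ∀ l ω i, A l ω i ∈ Set.Icc (0:ℝ) 1 := fun l ω i => hα_range l Z Z ω i
  have hAm : ∀ l i, Measurable[𝓕 l] fun ω => A l ω i := fun l i => hα_meas l Z Z i
  have hαA : ∀ (K V : Fin (ℓ+1) → Ω → Fin n → ℝ),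
      (fun l' => α l' (K l') (V l')) = A :=
    fun K V => funext fun l' => hα_const l' (K l') Z (V l') Z
  have hm : ∀ l, 𝓕 l ≤ (inferInstance : MeasurableSpace Ω) :=
    fun l => le_of_le_of_eq (hM.hmono (Fin.le_last l)) hM.hlast
  have hTop := hM.hTop
  have hpos := hM.hpos
  constructor
  · rintro K V P τ ⟨hK, hV, hP, hP01, hgrid, hV0, hVs, hKe, hPe, hτe⟩
    have hVs' : ∀ (l : Fin ℓ) ω i, V l.succ ω i = M.Vval A V τ l ω i := by
      intro l ω i
      have h := hVs l ω i
      rwa [hαA K V] at h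
    have hVf : ∀ l ω i, V l ω i = M.Vf A τ l ω i := Vf_unique hV0 hVs'
    have hTGτ : M.TGood 𝓕 τ := TGood.congr hτe (TGood_τval hM.hmono hM.ht hM.htT hK hV)
    have hPle : ∀ (l k : Fin (ℓ+1)), l ≤ k → ∀ ω i,
        P l k ω i ≤ indR (M.t l < τ i ω) := by
      intro l k hlk ω i
      rw [hPe l k hlk ω i]
      exact Pcf_le_ind hTop hpos hM.ht (hm l) hTGτ hlk ω i
    have hFmono : Monotone (M.FmapH A) := FmapH_mono hβ hM.hx0 hM.hLb hAr
    have hrange : ∀ ρ, M.FmapH A ρ ∈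
        {σ : Fin n → Ω → ℝ | ∀ i ω, σ i ω ∈ insert (M.T+1) (Set.range M.t)} :=
      fun ρ i ω => τval_mem' _ _ i ω
    have hstart : τ ≤ M.FmapH A τ := by
      rw [Pi.le_def]; intro i; rw [Pi.le_def]; intro ω
      rw [hτe i ω]
      refine τval_mono ?_ (fun l ω' i' => (hVf l ω' i').le) i ω
      intro l ω' i'
      rw [hKe l ω' i']
      exact Kval_mono hβ hM.hLb (fun l'' ω'' i'' => (hVf l'' ω'' i'').le)
        (fun l' k' hlk ω'' j => hPle l' k' hlk.le ω'' j)
        (fun _ _ _ _ _ => indR_nonneg _) (fun _ _ => le_rfl) l ω' i'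
    obtain ⟨mIt, hfix, hge⟩ := exists_fp_ge (M.FmapH A) hFmono _
      (funs_finite ((Set.finite_range M.t).insert _)) hrange τ hstart
    set σ := (M.FmapH A)^[mIt] τ with hσdef
    have hτσ : ∀ j ω, τ j ω ≤ σ j ω := fun j ω => hge j ω
    have hTGσ : M.TGood 𝓕 σ :=
      iter_TGood (fun ρ hρ => FmapH_TGood hβ hM.hmono hM.hx hM.ht hM.htT hAm hρ) hTGτ mIt
    have hVad := Vf_adapted hβ hM.hmono hM.hx hAm hTGσ
    have hVτσ : ∀ l ω i, M.Vf A τ l ω i ≤ M.Vf A σ l ω i :=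
      Vf_mono hβ hM.hx0 hM.hLb hAr hτσ
    refine ⟨fun l => M.Kval (M.Vf A σ) (M.PHfun σ) σ l, M.Vf A σ, M.PHfun σ, σ,
      ⟨Kval_adapted hβ hVad (fun l k i _ => measurable_indR (hTGσ.measLt l i)) hTGσ,
       hVad,
       fun l k i _ => measurable_indR (hTGσ.measLt l i),
       fun l k _ ω i => ⟨indR_nonneg _, indR_le_one _⟩,
       hTGσ.grid,
       fun ω i => rfl,
       ?_,
       fun l ω i => rfl,
       fun l k _ ω i => rfl,
       ?_⟩,
      ?_,
      fun l ω i => (hVf l ω i).le.trans (hVτσ l ω i),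
      ?_,
      hτσ⟩
    · intro l ω i
      rw [hαA (fun l => M.Kval (M.Vf A σ) (M.PHfun σ) σ l) (M.Vf A σ), Vf_succ]
    · intro i ω
      exact (congrFun (congrFun hfix i) ω).symm
    · intro l ω i
      rw [hKe l ω i]
      exact Kval_mono hβ hM.hLb (fun l' ω' i' => (hVf l' ω' i').le.trans (hVτσ l' ω' i'))
        (fun l' k' hlk ω' j => (hPle l' k' hlk.le ω' j).trans
          (indR_mono fun h => lt_of_lt_of_le h (hτσ j ω')))
        (fun _ _ _ _ _ => indR_nonneg _) hτσ l ω i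
    · intro l k hlk ω i
      exact (hPle l k hlk ω i).trans (indR_mono fun h => lt_of_lt_of_le h (hτσ i ω))
  · rintro KH VH PH τH ⟨hK, hV, hP, hP01, hgrid, hV0, hVs, hKe, hPe, hτe⟩
    have hVs' : ∀ (l : Fin ℓ) ω i, VH l.succ ω i = M.Vval A VH τH l ω i := by
      intro l ω i
      have h := hVs l ω i
      rwa [hαA KH VH] at h
    have hVf : ∀ l ω i, VH l ω i = M.Vf A τH l ω i := Vf_unique hV0 hVs'
    have hTGτ : M.TGood 𝓕 τH := TGood.congr hτe (TGood_τval hM.hmono hM.ht hM.htT hK hV)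
    have hGmono : Monotone (M.FmapC 𝓕 μ A) := FmapC_mono hTop hpos hβ hM.hx0 hM.hLb hAr
    have hrange : ∀ ρ, M.FmapC 𝓕 μ A ρ ∈
        {σ : Fin n → Ω → ℝ | ∀ i ω, σ i ω ∈ insert (M.T+1) (Set.range M.t)} :=
      fun ρ i ω => τval_mem' _ _ i ω
    have hstart : M.FmapC 𝓕 μ A τH ≤ τH := by
      rw [Pi.le_def]; intro i; rw [Pi.le_def]; intro ω
      conv_rhs => rw [hτe i ω]
      refine τval_mono ?_ (fun l ω' i' => (hVf l ω' i').ge) i ω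
      intro l ω' i'
      rw [hKe l ω' i']
      refine Kval_mono hβ hM.hLb (fun l'' ω'' i'' => (hVf l'' ω'' i'').ge)
        ?_ ?_ (fun _ _ => le_rfl) l ω' i'
      · intro l' k' hlk ω'' j
        rw [hPe l' k' hlk.le ω'' j]
        exact Pcf_le_ind hTop hpos hM.ht (hm l') hTGτ hlk.le ω'' j
      · intro l' k' hlk ω'' j
        exact (hP01 l' k' hlk.le ω'' j).1
    obtain ⟨mIt, hfix, hle⟩ := exists_fp_le (M.FmapC 𝓕 μ A) hGmono _
      (funs_finite ((Set.finite_range M.t).insert _)) hrange τH hstart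
    set σ := (M.FmapC 𝓕 μ A)^[mIt] τH with hσdef
    have hτσ : ∀ j ω, σ j ω ≤ τH j ω := fun j ω => hle j ω
    have hTGσ : M.TGood 𝓕 σ :=
      iter_TGood (fun ρ hρ => FmapC_TGood hβ hM.hmono hM.hx hM.ht hM.htT hAm hρ) hTGτ mIt
    have hVad := Vf_adapted hβ hM.hmono hM.hx hAm hTGσ
    have hVστ : ∀ l ω i, M.Vf A σ l ω i ≤ M.Vf A τH l ω i :=
      Vf_mono hβ hM.hx0 hM.hLb hAr hτσ
    have hPchain : ∀ (l k : Fin (ℓ+1)), l ≤ k → ∀ ω i,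
        M.Pcf 𝓕 μ σ l k ω i ≤ PH l k ω i := by
      intro l k hlk ω i
      rw [hPe l k hlk ω i]
      exact (Pcf_mono hTop hpos hτσ l k ω i).trans
        (Pcf_le_ind hTop hpos hM.ht (hm l) hTGτ hlk ω i)
    refine ⟨fun l => M.Kval (M.Vf A σ) (M.Pcf 𝓕 μ σ) σ l, M.Vf A σ, M.Pcf 𝓕 μ σ, σ,
      ⟨Kval_adapted hβ hVad (fun l k i _ => Pcf_adapted l k σ i) hTGσ,
       hVad,
       fun l k i _ => Pcf_adapted l k σ i,
       fun l k hlk ω i => ⟨Pcf_nonneg hTop hpos σ l k ω i,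
         Pcf_le_one hTop hpos (hm l) σ k ω i⟩,
       hTGσ.grid,
       fun ω i => rfl,
       ?_,
       fun l ω i => rfl,
       fun l k _ ω i => rfl,
       ?_⟩,
      ?_,
      fun l ω i => (hVστ l ω i).trans (hVf l ω i).ge,
      hPchain,
      hτσ⟩
    · intro l ω i
      rw [hαA (fun l => M.Kval (M.Vf A σ) (M.Pcf 𝓕 μ σ) σ l) (M.Vf A σ), Vf_succ]
    · intro i ω
      exact (congrFun (congrFun hfix i) ω).symm
    · intro l ω i
      rw [hKe l ω i]
      exact Kval_mono hβ hM.hLb (fun l' ω' i' => (hVστ l' ω' i').trans (hVf l' ω' i').ge)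
        (fun l' k' hlk ω' j => hPchain l' k' hlk.le ω' j)
        (fun l' k' hlk ω' j => (hP01 l' k' hlk.le ω' j).1)
        hτσ l ω i

end Paper
end
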